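/- arXiv:1705.07124 — 9 statements merged into one kernel-verified Lean document; each statement's English description precedes it below -/
import Mathlib

section
/- Let H be a nontrivial complex Hilbert space and S ∈ B(H). The following are equivalent: (i) S is not invertible in B(H); (ii) T is Birkhoff–James orthogonal to S for every unitary operator T ∈ B(H). -/
set_option synthInstance.maxHeartbeats 1000000
set_option maxHeartbeats 1000000

/-- An operator `S` on a nontrivial complex Hilbert space `H` is not invertible iff every
unitary operator `T ∈ B(H)` is Birkhoff–James orthogonal to `S`. -/
theorem not_isUnit_iff_forall_unitary_birkhoff_orthogonal
    {H : Type*} [NormedAddCommGroup H] [InnerProductSpace ℂ H] [CompleteSpace H] [Nontrivial H]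
    (S : H →L[ℂ] H) :
    ¬ IsUnit S ↔
      ∀ T : H →L[ℂ] H, T ∈ unitary (H →L[ℂ] H) → ∀ lam : ℂ, ‖T‖ ≤ ‖T + lam • S‖ := by
  constructor
  · -- (i) → (ii)
    intro hS T hT lam
    by_contra hlt
    push_neg at hlt
    have hT1 : ‖T‖ = 1 := CStarRing.norm_of_mem_unitary hT
    have key : ‖(1 : H →L[ℂ] H) + lam • (star T * S)‖ < 1 := by
      have h0 : star T * (T + lam • S) = 1 + lam • (star T * S) := by
        rw [mul_add, Unitary.star_mul_self_of_mem hT, mul_smul_comm]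
      calc ‖(1 : H →L[ℂ] H) + lam • (star T * S)‖
          = ‖star T * (T + lam • S)‖ := by rw [h0]
        _ = ‖T + lam • S‖ := CStarRing.norm_mem_unitary_mul _ (Unitary.star_mem hT)
        _ < 1 := hT1 ▸ hlt
    -- hence `lam • (star T * S)` is a unit
    have hneg : IsUnit (-(lam • (star T * S))) := by
      have h1 := (Units.oneSub (1 + lam • (star T * S)) key).isUnit
      simpa using h1
    have hb : IsUnit (lam • (star T * S)) := by simpa using hneg.neg
    have hlam : lam ≠ 0 := by
      rintro rfl
      simp only [zero_smul, add_zero, norm_one, lt_irrefl] at key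
    have hX : IsUnit (star T * S) := by
      have h2 : (lam⁻¹ • (1 : H →L[ℂ] H)) * (lam • (star T * S)) = star T * S := by
        rw [smul_mul_assoc, one_mul, smul_smul, inv_mul_cancel₀ hlam, one_smul]
      have hscal : IsUnit (lam⁻¹ • (1 : H →L[ℂ] H)) := by
        refine ⟨⟨lam⁻¹ • 1, lam • 1, ?_, ?_⟩, rfl⟩ <;>
          rw [smul_mul_smul_comm] <;>
            simp [inv_mul_cancel₀ hlam, mul_inv_cancel₀ hlam]
      exact h2 ▸ hscal.mul hb
    have hTu : IsUnit T :=
      ⟨⟨T, star T, Unitary.mul_star_self_of_mem hT, Unitary.star_mul_self_of_mem hT⟩, rfl⟩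
    exact hS <| by
      have : T * (star T * S) = S := by
        rw [← mul_assoc, Unitary.mul_star_self_of_mem hT, one_mul]
      exact this ▸ hTu.mul hX
  · -- (ii) → (i)
    intro h hS
    set P : H →L[ℂ] H := CFC.sqrt (star S * S) with hPdef
    have hP0 : (0 : H →L[ℂ] H) ≤ P := CFC.sqrt_nonneg _
    have hPsa : IsSelfAdjoint P := hP0.isSelfAdjoint
    have hPP : P * P = star S * S := CFC.sqrt_mul_sqrt_self _ (star_mul_self_nonneg S)
    have hSS : IsUnit (star S * S) := hS.star.mul hS
    -- `P` is a unit
    obtain ⟨w, hw⟩ := hSS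
    have hPb : P * (P * ↑w⁻¹) = 1 := by rw [← mul_assoc, hPP, ← hw, w.mul_inv]
    have hPc : (↑w⁻¹ * P) * P = 1 := by rw [mul_assoc, hPP, ← hw, w.inv_mul]
    have hbc : P * ↑w⁻¹ = ↑w⁻¹ * P := by
      have : (↑w⁻¹ * P) * (P * (P * ↑w⁻¹)) = ↑w⁻¹ * P := by rw [hPb, mul_one]
      calc P * ↑w⁻¹ = 1 * (P * ↑w⁻¹) := (one_mul _).symm
        _ = ((↑w⁻¹ * P) * P) * (P * ↑w⁻¹) := by rw [hPc]
        _ = (↑w⁻¹ * P) * (P * (P * ↑w⁻¹)) := by noncomm_ring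
        _ = ↑w⁻¹ * P := this
    have hPunit : IsUnit P := ⟨⟨P, P * ↑w⁻¹, hPb, by rw [hbc]; exact hPc⟩, rfl⟩
    obtain ⟨u, hu⟩ := hPunit
    have hmulinv : P * ↑u⁻¹ = 1 := by rw [← hu]; exact u.mul_inv
    have hinvmul : (↑u⁻¹ : H →L[ℂ] H) * P = 1 := by rw [← hu]; exact u.inv_mul
    -- inverse of `P` is selfadjoint
    have hstarinv : star (↑u⁻¹ : H →L[ℂ] H) = ↑u⁻¹ := by
      have h1 : star (↑u⁻¹ : H →L[ℂ] H) * P = 1 := by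
        rw [← hPsa.star_eq, ← star_mul, hmulinv, star_one]
      calc star (↑u⁻¹ : H →L[ℂ] H) = star ↑u⁻¹ * (P * ↑u⁻¹) := by rw [hmulinv, mul_one]
        _ = (star ↑u⁻¹ * P) * ↑u⁻¹ := by rw [mul_assoc]
        _ = ↑u⁻¹ := by rw [h1, one_mul]
    -- the unitary `U`
    set U : H →L[ℂ] H := S * ↑u⁻¹ with hUdef
    have hU1 : star U * U = 1 := by
      have : star U * U = ↑u⁻¹ * ((star S * S) * ↑u⁻¹) := by
        rw [hUdef, star_mul, hstarinv]; noncomm_ring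
      rw [this, ← hPP]
      calc (↑u⁻¹ : H →L[ℂ] H) * (P * P * ↑u⁻¹) = (↑u⁻¹ * P) * (P * ↑u⁻¹) := by noncomm_ring
        _ = 1 := by rw [hinvmul, hmulinv, one_mul]
    have hUunit : IsUnit U := hS.mul u⁻¹.isUnit
    obtain ⟨v, hv⟩ := hUunit
    have hU2 : U * star U = 1 := by
      have hv' : U * ↑v⁻¹ = 1 := by rw [← hv]; exact v.mul_inv
      have hsv : star U = ↑v⁻¹ := by
        calc star U = star U * (U * ↑v⁻¹) := by rw [hv', mul_one]
          _ = (star U * U) * ↑v⁻¹ := (mul_assoc _ _ _).symm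
          _ = ↑v⁻¹ := by rw [hU1, one_mul]
      rw [hsv]; exact hv'
    have hUmem : U ∈ unitary (H →L[ℂ] H) := Unitary.mem_iff.mpr ⟨hU1, hU2⟩
    -- the norm estimate
    have hPnorm : (0 : ℝ) < ‖P‖ := norm_pos_iff.mpr (hu ▸ u.isUnit).ne_zero
    set t : ℝ := ‖P‖⁻¹ with htdef
    have key : ‖(1 : H →L[ℂ] H) - t • P‖ < 1 := by
      have h1 : (1 : H →L[ℂ] H) - t • P = cfc (fun x : ℝ => 1 - t * x) P := by
        rw [cfc_sub (fun _ : ℝ => (1 : ℝ)) (fun x : ℝ => t * x) P, cfc_const 1 P, map_one,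
          cfc_const_mul_id t P]
      rw [h1]
      refine norm_cfc_lt one_pos fun x hx => ?_
      have hx0 : 0 ≤ x := spectrum_nonneg_of_nonneg hP0 hx
      have hxne : x ≠ 0 := by rintro rfl; exact spectrum.zero_notMem ℝ (hu ▸ u.isUnit) hx
      have hxpos : 0 < x := lt_of_le_of_ne hx0 (Ne.symm hxne)
      have hxle : x ≤ ‖P‖ := by
        have := spectrum.norm_le_norm_of_mem hx
        rwa [Real.norm_of_nonneg hx0] at this
      have htx1 : t * x ≤ 1 := by
        rw [htdef]
        calc ‖P‖⁻¹ * x ≤ ‖P‖⁻¹ * ‖P‖ := by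
              exact mul_le_mul_of_nonneg_left hxle (le_of_lt (inv_pos.mpr hPnorm))
          _ = 1 := inv_mul_cancel₀ (ne_of_gt hPnorm)
      have htx0 : 0 < t * x := mul_pos (inv_pos.mpr hPnorm) hxpos
      rw [Real.norm_eq_abs, abs_lt]
      constructor <;> linarith
    -- conclude
    have hUP : U * P = S := by rw [hUdef, mul_assoc, hinvmul, mul_one]
    have hfact : U + (-(t : ℂ)) • S = U * ((1 : H →L[ℂ] H) - t • P) := by
      rw [neg_smul, Complex.coe_smul, mul_sub, mul_one, mul_smul_comm, hUP]
      abel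
    have := h U hUmem (-(t : ℂ))
    rw [hfact, CStarRing.norm_mem_unitary_mul _ hUmem,
      CStarRing.norm_of_mem_unitary hUmem] at this
    linarith
end

section
/- Let H be a finite-dimensional (nontrivial) complex Hilbert space and T, S ∈ B(H). Then T is Birkhoff–James orthogonal to S if and only if there exists a unit vector ξ ∈ H such that |T|ξ = ∥T∥ξ and ⟨Tξ, Sξ⟩ = 0. -/
open ContinuousLinearMap

section BirkhoffAux
variable {H : Type*} [NormedAddCommGroup H] [InnerProductSpace ℂ H] [FiniteDimensional ℂ H]

local notation "⟪" x ", " y "⟫" => @inner ℂ _ _ x y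

/-- Norm attainment on the unit sphere in finite dimensions. -/
lemma bs_exists_norm_eq [Nontrivial H] (A : H →L[ℂ] H) :
    ∃ x : H, ‖x‖ = 1 ∧ ‖A x‖ = ‖A‖ := by
  obtain ⟨x₀, hx₀⟩ : ∃ x : H, ‖x‖ = 1 := exists_norm_eq H one_pos.le
  have hsph : IsCompact (Metric.sphere (0:H) 1) := isCompact_sphere 0 1
  have hne : (Metric.sphere (0:H) 1).Nonempty := ⟨x₀, by simpa using hx₀⟩
  have hcont : ContinuousOn (fun x : H => ‖A x‖) (Metric.sphere (0:H) 1) :=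
    (A.continuous.norm).continuousOn
  obtain ⟨z, hz, hmax⟩ := hsph.exists_isMaxOn hne hcont
  have hz1 : ‖z‖ = 1 := by simpa using hz
  refine ⟨z, hz1, le_antisymm (by simpa [hz1] using A.le_opNorm z) ?_⟩
  refine A.opNorm_le_bound (norm_nonneg _) fun y => ?_
  rcases eq_or_ne y 0 with rfl | hy
  · simp
  · have hyn : ‖y‖ ≠ 0 := norm_ne_zero_iff.mpr hy
    have hmem : (‖y‖⁻¹ • y) ∈ Metric.sphere (0:H) 1 := by
      simp [norm_smul, abs_of_nonneg (norm_nonneg y), inv_mul_cancel₀ hyn]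
    have h5 : ‖A (‖y‖⁻¹ • y)‖ ≤ ‖A z‖ := hmax hmem
    rw [A.map_smul_of_tower, norm_smul, norm_inv, norm_norm] at h5
    calc ‖A y‖ = ‖y‖ * (‖y‖⁻¹ * ‖A y‖) := by field_simp
    _ ≤ ‖y‖ * ‖A z‖ := mul_le_mul_of_nonneg_left h5 (norm_nonneg y)
    _ = ‖A z‖ * ‖y‖ := mul_comm _ _

/-- A positive operator with vanishing quadratic form at `x` kills `x`. -/
lemma bs_isPositive_apply_eq_zero {P : H →L[ℂ] H} (hP : P.IsPositive) {x : H}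
    (hx : (⟪x, P x⟫).re = 0) : P x = 0 := by
  haveI : CompleteSpace H := FiniteDimensional.complete ℂ H
  have hsym : ∀ v w : H, ⟪P v, w⟫ = ⟪v, P w⟫ :=
    fun v w => hP.isSelfAdjoint.isSymmetric v w
  have hnn : ∀ v : H, 0 ≤ (⟪v, P v⟫).re := by
    intro v
    have h := hP.inner_nonneg_left v
    rw [hsym v v] at h
    simpa using (Complex.le_def.mp h).1
  have key : ∀ y : H, (⟪y, P x⟫).re = 0 := by
    intro y
    set b : ℝ := (⟪y, P x⟫).re with hbdef
    set a : ℝ := (⟪y, P y⟫).re with hadef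
    have ha : 0 ≤ a := hnn y
    have hrePxy : (⟪x, P y⟫).re = b := by
      have h1 : ⟪x, P y⟫ = (starRingEnd ℂ) ⟪y, P x⟫ := by
        rw [← hsym x y]; exact (inner_conj_symm (P x) y).symm
      rw [hbdef, h1, Complex.conj_re]
    have hquad : ∀ t : ℝ, 0 ≤ a * t ^ 2 + 2 * b * t := by
      intro t
      have h0 := hnn (x + (t:ℂ) • y)
      have hexp : ⟪x + (t:ℂ) • y, P (x + (t:ℂ) • y)⟫
          = ⟪x, P x⟫ + (t:ℂ) * ⟪x, P y⟫ + (t:ℂ) * ⟪y, P x⟫ + (t:ℂ)^2 * ⟪y, P y⟫ := by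
        simp only [map_add, map_smul, inner_add_left, inner_add_right,
          inner_smul_left, inner_smul_right, Complex.conj_ofReal]
        ring
      rw [hexp] at h0
      simp only [Complex.add_re, Complex.mul_re, Complex.ofReal_re, Complex.ofReal_im,
        zero_mul, sub_zero, Complex.ofReal_pow] at h0
      have hpowre : ((t:ℂ)^2).re = t^2 := by norm_cast
      have hpowim : ((t:ℂ)^2).im = 0 := by norm_cast
      rw [hx, hrePxy, ← hbdef, ← hadef, hpowre, hpowim] at h0
      nlinarith [h0]
    have hb0 : b = 0 := by
      rcases eq_or_lt_of_le ha with ha0 | hapos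
      · have h1 := hquad 1
        have h2 := hquad (-1)
        nlinarith [h1, h2]
      · have h := hquad (-b / a)
        have key2 : a * (-b/a)^2 + 2*b*(-b/a) = -(b^2/a) := by
          field_simp
          ring
        rw [key2] at h
        have hb2 : b^2 ≤ 0 := by
          have h' : b^2/a ≤ 0 := by linarith
          calc b^2 = b^2/a * a := by field_simp
          _ ≤ 0 := mul_nonpos_of_nonpos_of_nonneg h' hapos.le
        have hbb : b^2 = 0 := le_antisymm hb2 (sq_nonneg b)
        exact pow_eq_zero_iff (by norm_num : (2:ℕ) ≠ 0) |>.mp hbb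
    exact hb0
  have h1 := key (P x)
  have h2 : (⟪P x, P x⟫).re = 0 := by
    rw [← inner_conj_symm] at h1
    simpa using h1
  have h3 : (‖P x‖ : ℝ)^2 = 0 := by
    rw [← @inner_self_eq_norm_sq ℂ]
    simpa using h2
  simpa using pow_eq_zero_iff (n := 2) (by norm_num) |>.mp h3


set_option synthInstance.maxHeartbeats 400000 in
lemma bs_sqrt_inner (T : H →L[ℂ] H) (x : H) :
    ⟪CFC.sqrt (star T * T) x, CFC.sqrt (star T * T) x⟫ = ⟪T x, T x⟫ := by
  haveI : CompleteSpace H := FiniteDimensional.complete ℂ H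
  set A := CFC.sqrt (star T * T) with hA
  have hnn : (0 : H →L[ℂ] H) ≤ A := CFC.sqrt_nonneg (a := star T * T)
  have hsa : IsSelfAdjoint A := IsSelfAdjoint.of_nonneg hnn
  have hAA : A * A = star T * T := CFC.sqrt_mul_sqrt_self _ (star_mul_self_nonneg T)
  have h1 : ⟪A x, A x⟫ = ⟪x, A (A x)⟫ :=
    (isSelfAdjoint_iff_isSymmetric.mp hsa) x (A x)
  have h2 : A (A x) = ContinuousLinearMap.adjoint T (T x) := by
    have := congrArg (fun (Q : H →L[ℂ] H) => Q x) hAA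
    simpa [ContinuousLinearMap.mul_apply, ContinuousLinearMap.star_eq_adjoint] using this
  rw [h1, h2, ContinuousLinearMap.adjoint_inner_right]

set_option synthInstance.maxHeartbeats 400000 in
lemma bs_sqrt_norm_apply (T : H →L[ℂ] H) (x : H) :
    ‖CFC.sqrt (star T * T) x‖ = ‖T x‖ := by
  have h := bs_sqrt_inner T x
  rw [inner_self_eq_norm_sq_to_K, inner_self_eq_norm_sq_to_K] at h
  have h2 : (‖CFC.sqrt (star T * T) x‖:ℝ)^2 = (‖T x‖:ℝ)^2 := by
    exact_mod_cast h
  nlinarith [norm_nonneg (CFC.sqrt (star T * T) x), norm_nonneg (T x)]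

set_option synthInstance.maxHeartbeats 400000 in
lemma bs_sqrt_opNorm (T : H →L[ℂ] H) : ‖CFC.sqrt (star T * T)‖ = ‖T‖ := by
  refine le_antisymm (ContinuousLinearMap.opNorm_le_bound _ (norm_nonneg T) fun y => ?_)
    (ContinuousLinearMap.opNorm_le_bound _ (norm_nonneg _) fun y => ?_)
  · rw [bs_sqrt_norm_apply]; exact T.le_opNorm y
  · rw [← bs_sqrt_norm_apply]; exact (CFC.sqrt (star T * T)).le_opNorm y

set_option synthInstance.maxHeartbeats 400000 in
lemma bs_eigen (T : H →L[ℂ] H) {x : H} (hx1 : ‖x‖ = 1) (hxT : ‖T x‖ = ‖T‖) :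
    CFC.sqrt (star T * T) x = ‖T‖ • x := by
  haveI : CompleteSpace H := FiniteDimensional.complete ℂ H
  set c := ‖T‖ with hc
  set A := CFC.sqrt (star T * T) with hA
  have hnn : (0 : H →L[ℂ] H) ≤ A := CFC.sqrt_nonneg (a := star T * T)
  have hsa : IsSelfAdjoint A := IsSelfAdjoint.of_nonneg hnn
  have hsym : ∀ v w : H, ⟪A v, w⟫ = ⟪v, A w⟫ :=
    fun v w => (isSelfAdjoint_iff_isSymmetric.mp hsa) v w
  have hApos : A.IsPositive := (ContinuousLinearMap.nonneg_iff_isPositive A).mp hnn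
  rcases eq_or_lt_of_le (norm_nonneg T) with hc0 | hcpos
  · have hT0 : T = 0 := by rw [← norm_eq_zero]; exact hc0.symm
    have hAz : A = 0 := by rw [hA, hT0]; simp [CFC.sqrt_zero]
    rw [hAz, hc, ← hc0]
    simp
  · set B : H →L[ℂ] H := ((c : ℂ))^2 • 1 - A * A with hB
    have hBy : ∀ y : H, ⟪y, B y⟫ = ((c:ℂ))^2 * ⟪y, y⟫ - ⟪A y, A y⟫ := by
      intro y
      rw [hB]
      simp only [ContinuousLinearMap.sub_apply, ContinuousLinearMap.smul_apply,
        ContinuousLinearMap.one_apply, ContinuousLinearMap.mul_apply,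
        inner_sub_right, inner_smul_right]
      rw [← hsym y (A y)]
    have hre_inner : ∀ y : H, (⟪y, B y⟫).re = c^2 * ‖y‖^2 - ‖A y‖^2 := by
      intro y
      have h1 : (⟪y, y⟫ : ℂ).re = ‖y‖^2 := by
        simpa using inner_self_eq_norm_sq (𝕜 := ℂ) y
      have h2 : (⟪A y, A y⟫ : ℂ).re = ‖A y‖^2 := by
        simpa using inner_self_eq_norm_sq (𝕜 := ℂ) (A y)
      have hcast : ((c:ℂ))^2 = ((c^2 : ℝ) : ℂ) := by norm_cast
      rw [hBy y, hcast, Complex.sub_re, Complex.re_ofReal_mul, h1, h2]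
    have hBsa : IsSelfAdjoint B := by
      rw [hB, IsSelfAdjoint, star_sub, star_smul, star_one, star_mul, hsa.star_eq]
      simp [Complex.conj_ofReal]
    have hBpos : B.IsPositive := by
      refine ⟨hBsa.isSymmetric, fun y => ?_⟩
      change 0 ≤ RCLike.re (⟪B y, y⟫)
      rw [inner_re_symm]
      have : (⟪y, B y⟫).re = c^2 * ‖y‖^2 - ‖A y‖^2 := hre_inner y
      simp only [RCLike.re_to_complex]
      rw [this]
      have hAyle : ‖A y‖ ≤ c * ‖y‖ := by
        rw [hA, bs_sqrt_norm_apply, hc]; exact T.le_opNorm y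
      nlinarith [norm_nonneg (A y), norm_nonneg y]
    have hBx : B x = 0 := by
      refine bs_isPositive_apply_eq_zero hBpos ?_
      rw [hre_inner x, hx1, hA, bs_sqrt_norm_apply, hxT]
      ring
    have hA2x : A (A x) = ((c:ℂ))^2 • x := by
      have h3 := congrArg (fun (Q : H →L[ℂ] H) => Q x) hB.symm
      simp only [ContinuousLinearMap.sub_apply, ContinuousLinearMap.smul_apply,
        ContinuousLinearMap.one_apply, ContinuousLinearMap.mul_apply] at h3
      rw [hBx] at h3
      exact (sub_eq_zero.mp h3).symm
    set w := A x - ((c:ℝ):ℂ) • x with hw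
    have hAw : A w = -((c:ℝ):ℂ) • w := by
      rw [hw]
      simp only [map_sub, map_smul, hA2x]
      module
    have hre : (⟪w, A w⟫).re = -c * ‖w‖^2 := by
      rw [hAw, inner_smul_right]
      have h1 : (⟪w, w⟫ : ℂ).re = ‖w‖^2 := by
        simpa using inner_self_eq_norm_sq (𝕜 := ℂ) w
      have h1' : (⟪w, w⟫ : ℂ).im = 0 := by
        rw [← RCLike.im_to_complex]; exact inner_self_im w
      have : (-((c:ℝ):ℂ)) * ⟪w, w⟫ = ((-c : ℝ):ℂ) * ⟪w, w⟫ := by norm_cast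
      rw [this, Complex.re_ofReal_mul, h1]
    have h0 : 0 ≤ (⟪w, A w⟫).re := by
      have := hApos.inner_nonneg_right w
      simpa using (Complex.le_def.mp this).1
    have hw0 : w = 0 := by
      rw [hre] at h0
      have hcpos' : 0 < c := hc ▸ hcpos
      have h4 : ‖w‖ = 0 := by
        by_contra hne
        have hpos : 0 < ‖w‖ := lt_of_le_of_ne (norm_nonneg w) (Ne.symm hne)
        have : 0 < c * ‖w‖^2 := mul_pos hcpos' (by positivity)
        linarith
      exact norm_eq_zero.mp h4
    have h5 : A x = ((c:ℝ):ℂ) • x := sub_eq_zero.mp (hw ▸ hw0)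
    rw [h5, show ((c:ℝ):ℂ) = algebraMap ℝ ℂ c from rfl, algebraMap_smul]


lemma bs_key [Nontrivial H] (T S : H →L[ℂ] H)
    (horth : ∀ lam : ℂ, ‖T‖ ≤ ‖T + lam • S‖) (u : ℂ) (hu : ‖u‖ = 1) :
    ∃ x : H, ‖x‖ = 1 ∧ ‖T x‖ = ‖T‖ ∧ 0 ≤ (u * ⟪T x, S x⟫).re := by
  set δ : ℕ → ℝ := fun n => 1 / ((n:ℝ) + 1) with hδ
  have hδpos : ∀ n, 0 < δ n := fun n => by positivity
  have hδanti : ∀ n m : ℕ, n ≤ m → δ m ≤ δ n := by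
    intro n m h
    apply one_div_le_one_div_of_le (by positivity)
    have : (n:ℝ) ≤ m := Nat.cast_le.mpr h
    linarith
  have hδ0 : Filter.Tendsto δ Filter.atTop (nhds 0) :=
    tendsto_one_div_add_atTop_nhds_zero_nat
  set lam : ℕ → ℂ := fun n => ((δ n : ℝ) : ℂ) * u with hlam
  have hchoice : ∀ n : ℕ, ∃ x : H, ‖x‖ = 1 ∧ ‖(T + lam n • S) x‖ = ‖T + lam n • S‖ :=
    fun n => bs_exists_norm_eq _
  choose xs hxs1 hxs2 using hchoice
  have hlamnorm : ∀ n, ‖lam n‖ = δ n := by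
    intro n
    rw [hlam]
    simp only [norm_mul, hu, mul_one, Complex.norm_real]
    exact abs_of_pos (hδpos n)
  -- expansion inequality
  have key1 : ∀ n, ‖T‖^2 ≤ ‖T (xs n)‖^2 + 2 * (δ n * (u * ⟪T (xs n), S (xs n)⟫).re)
      + (δ n)^2 * ‖S‖^2 := by
    intro n
    have h1 : ‖T‖ ≤ ‖(T + lam n • S) (xs n)‖ := by
      rw [hxs2 n]; exact horth (lam n)
    have h2 : ‖T‖^2 ≤ ‖(T + lam n • S) (xs n)‖^2 :=
      pow_le_pow_left₀ (norm_nonneg T) h1 2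
    have h3 : (T + lam n • S) (xs n) = T (xs n) + lam n • S (xs n) := by
      simp
    rw [h3, @norm_add_sq ℂ] at h2
    have h4 : ⟪T (xs n), lam n • S (xs n)⟫ = lam n * ⟪T (xs n), S (xs n)⟫ :=
      inner_smul_right _ _ _
    rw [h4] at h2
    have h5 : RCLike.re (lam n * ⟪T (xs n), S (xs n)⟫)
        = δ n * (u * ⟪T (xs n), S (xs n)⟫).re := by
      rw [hlam]
      simp only [RCLike.re_to_complex]
      rw [mul_assoc, Complex.re_ofReal_mul]
    rw [h5] at h2
    have h6 : ‖lam n • S (xs n)‖^2 ≤ (δ n)^2 * ‖S‖^2 := by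
      rw [norm_smul, hlamnorm n]
      have h7 : ‖S (xs n)‖ ≤ ‖S‖ := by
        have := S.le_opNorm (xs n)
        rwa [hxs1 n, mul_one] at this
      have h8 : δ n * ‖S (xs n)‖ ≤ δ n * ‖S‖ := mul_le_mul_of_nonneg_left h7 (hδpos n).le
      have h9 : (0:ℝ) ≤ δ n * ‖S (xs n)‖ := by positivity
      calc (δ n * ‖S (xs n)‖)^2 ≤ (δ n * ‖S‖)^2 := by nlinarith
      _ = (δ n)^2 * ‖S‖^2 := by ring
    linarith
  have key2 : ∀ n, -(δ n) * ‖S‖^2 / 2 ≤ (u * ⟪T (xs n), S (xs n)⟫).re := by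
    intro n
    have hTle : ‖T (xs n)‖ ≤ ‖T‖ := by
      have := T.le_opNorm (xs n)
      rwa [hxs1 n, mul_one] at this
    have hTle2 : ‖T (xs n)‖^2 ≤ ‖T‖^2 := pow_le_pow_left₀ (norm_nonneg _) hTle 2
    have h := key1 n
    have hp := hδpos n
    nlinarith [h, hTle2, hp]
  have key3 : ∀ n, ‖T‖ - δ n * ‖S‖ ≤ ‖T (xs n)‖ := by
    intro n
    have h1 : ‖T‖ ≤ ‖(T + lam n • S) (xs n)‖ := by
      rw [hxs2 n]; exact horth (lam n)
    have h3 : (T + lam n • S) (xs n) = T (xs n) + lam n • S (xs n) := by simp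
    have h4 : ‖T (xs n) + lam n • S (xs n)‖ ≤ ‖T (xs n)‖ + δ n * ‖S‖ := by
      refine (norm_add_le _ _).trans ?_
      have h5 : ‖lam n • S (xs n)‖ ≤ δ n * ‖S‖ := by
        rw [norm_smul, hlamnorm n]
        have h7 : ‖S (xs n)‖ ≤ ‖S‖ := by
          have := S.le_opNorm (xs n)
          rwa [hxs1 n, mul_one] at this
        exact mul_le_mul_of_nonneg_left h7 (hδpos n).le
      linarith
    rw [h3] at h1
    linarith
  -- compactness
  have hmem : ∀ n, xs n ∈ Metric.sphere (0:H) 1 := by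
    intro n; simpa using hxs1 n
  obtain ⟨x, hxsph, φ, hφ, hconv⟩ := (isCompact_sphere (0:H) 1).tendsto_subseq hmem
  have hx1 : ‖x‖ = 1 := by simpa using hxsph
  refine ⟨x, hx1, ?_, ?_⟩
  · -- ‖T x‖ = ‖T‖
    have hTcont : Filter.Tendsto (fun n => ‖T (xs (φ n))‖) Filter.atTop (nhds ‖T x‖) :=
      ((T.continuous.norm).tendsto x).comp hconv
    have hlow : Filter.Tendsto (fun n => ‖T‖ - δ n * ‖S‖) Filter.atTop (nhds ‖T‖) := by
      have h2 := Filter.Tendsto.sub (tendsto_const_nhds (x := ‖T‖)) (hδ0.mul_const ‖S‖)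
      simp only [zero_mul, sub_zero] at h2
      exact h2
    have hle : ∀ n, ‖T‖ - δ n * ‖S‖ ≤ ‖T (xs (φ n))‖ := by
      intro n
      refine le_trans ?_ (key3 (φ n))
      have := hδanti n (φ n) (hφ.le_apply)
      nlinarith [norm_nonneg S]
    have h := le_of_tendsto_of_tendsto' hlow hTcont hle
    have h2 : ‖T x‖ ≤ ‖T‖ := by
      have := T.le_opNorm x
      rwa [hx1, mul_one] at this
    linarith
  · -- 0 ≤ re(u * inner)
    have hgcont : Filter.Tendsto (fun n => (u * ⟪T (xs (φ n)), S (xs (φ n))⟫).re)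
        Filter.atTop (nhds ((u * ⟪T x, S x⟫).re)) := by
      have hcont : Continuous fun y : H => (u * ⟪T y, S y⟫).re :=
        Complex.continuous_re.comp (continuous_const.mul (T.continuous.inner S.continuous))
      exact (hcont.tendsto x).comp hconv
    have hlow : Filter.Tendsto (fun n => -(δ n) * ‖S‖^2 / 2) Filter.atTop (nhds 0) := by
      have h2 := (hδ0.neg.mul_const (‖S‖^2)).div_const 2
      simp only [neg_zero, zero_mul, zero_div] at h2
      exact h2
    have hle : ∀ n, -(δ n) * ‖S‖^2 / 2 ≤ (u * ⟪T (xs (φ n)), S (xs (φ n))⟫).re := by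
      intro n
      refine le_trans ?_ (key2 (φ n))
      have := hδanti n (φ n) (hφ.le_apply)
      have h1 := hδpos n
      have h2 := hδpos (φ n)
      nlinarith [sq_nonneg ‖S‖]
    exact le_of_tendsto_of_tendsto' hlow hgcont hle


/-- Core Toeplitz–Hausdorff step. -/
lemma bs_TH_step (C : H →L[ℂ] H) (E : Submodule ℂ H) {x y : H}
    (hxE : x ∈ E) (hyE : y ∈ E) (hx1 : ‖x‖ = 1) (hy1 : ‖y‖ = 1)
    (hgx : ⟪x, C x⟫ = 1) (hgy : ⟪y, C y⟫ = 0) {s : ℝ} (hs0 : 0 ≤ s) (hs1 : s ≤ 1) :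
    ∃ z : H, z ∈ E ∧ ‖z‖ = 1 ∧ ⟪z, C z⟫ = (s:ℂ) := by
  classical
  set p := ⟪x, C y⟫ with hp
  set q := ⟪y, C x⟫ with hq
  set uu := p - (starRingEnd ℂ) q with huu
  set ω : ℂ := if uu = 0 then 1 else (starRingEnd ℂ) uu / (‖uu‖ : ℂ) with hω
  have hω1 : ‖ω‖ = 1 := by
    rw [hω]
    split_ifs with h
    · simp
    · have hne : ‖uu‖ ≠ 0 := norm_ne_zero_iff.mpr h
      have h9 : ‖((‖uu‖:ℝ):ℂ)‖ = ‖uu‖ := by simp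
      rw [norm_div, RCLike.norm_conj, h9]
      exact div_self hne
  have hωu : (ω * uu).im = 0 := by
    rw [hω]
    split_ifs with h
    · simp [h]
    · rw [div_mul_eq_mul_div, mul_comm, Complex.mul_conj]
      simp
  set y' := ω • y with hy'
  have hy'E : y' ∈ E := E.smul_mem ω hyE
  have hy'1 : ‖y'‖ = 1 := by rw [hy', norm_smul, hω1, hy1, mul_one]
  have hgy' : ⟪y', C y'⟫ = 0 := by
    rw [hy', map_smul, inner_smul_left, inner_smul_right, hgy]
    ring
  set r := ⟪x, C y'⟫ + ⟪y', C x⟫ with hr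
  have hrval : r = ω * p + (starRingEnd ℂ) ω * q := by
    rw [hr, hy', map_smul, inner_smul_right, inner_smul_left, hp, hq]
  have hrim : r.im = 0 := by
    have h2 : r = ω * uu + (ω * (starRingEnd ℂ) q + (starRingEnd ℂ) (ω * (starRingEnd ℂ) q)) := by
      rw [hrval, huu]
      rw [map_mul, Complex.conj_conj]
      ring
    rw [h2, Complex.add_im, hωu, Complex.add_im, Complex.conj_im]
    ring
  -- the path
  set N : ℝ → H := fun t => ((t:ℝ):ℂ) • x + ((1 - t : ℝ):ℂ) • y' with hN
  have hNE : ∀ t, N t ∈ E := fun t =>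
    E.add_mem (E.smul_mem _ hxE) (E.smul_mem _ hy'E)
  have e1 : ⟪x, C y'⟫ = ω * p := by rw [hy', map_smul, inner_smul_right, hp]
  have e2 : ⟪y', C x⟫ = (starRingEnd ℂ) ω * q := by rw [hy', inner_smul_left, hq]
  have hNexp : ∀ t : ℝ, ⟪N t, C (N t)⟫ = ((t^2 : ℝ):ℂ) + ((t * (1 - t) : ℝ):ℂ) * r := by
    intro t
    rw [hrval, hN]
    simp only [map_add, map_smul, inner_add_left, inner_add_right,
      inner_smul_left, inner_smul_right, Complex.conj_ofReal, hgx, hgy', e1, e2]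
    push_cast
    ring
  have hNnz : ∀ t ∈ Set.Icc (0:ℝ) 1, N t ≠ 0 := by
    intro t ht h0
    rcases eq_or_ne t 0 with rfl | ht0
    · rw [hN] at h0
      simp only [Complex.ofReal_zero, zero_smul, zero_add, sub_zero, Complex.ofReal_one,
        one_smul] at h0
      rw [h0] at hy'1
      simp at hy'1
    · -- t ≠ 0 : then (t:ℂ) • x = -((1-t):ℂ) • y'
      have h1 : ((t:ℝ):ℂ) • x = -(((1 - t : ℝ):ℂ) • y') := by
        rw [hN] at h0
        linear_combination (norm := module) h0
      have h2 : ‖((t:ℝ):ℂ) • x‖ = ‖((1 - t : ℝ):ℂ) • y'‖ := by rw [h1, norm_neg]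
      rw [norm_smul, norm_smul, hx1, hy'1, mul_one, mul_one,
        Complex.norm_real, Complex.norm_real] at h2
      have ht' : |t| = |1 - t| := h2
      have ht0' : 0 < t := lt_of_le_of_ne ht.1 (Ne.symm ht0)
      have h1t : 0 ≤ 1 - t := by linarith [ht.2]
      rw [abs_of_pos ht0', abs_of_nonneg h1t] at ht'
      -- t = 1 - t, so x = -y'
      have hx_eq : x = -y' := by
        have h3 : ((t:ℝ):ℂ) • x = ((t:ℝ):ℂ) • (-y') := by
          rw [h1, ← ht']
          module
        have ht0c : ((t:ℝ):ℂ) ≠ 0 := by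
          simp [Complex.ofReal_ne_zero]
          exact ht0
        exact smul_right_injective H ht0c h3
      rw [hx_eq] at hgx
      rw [map_neg, inner_neg_neg, hgy'] at hgx
      exact one_ne_zero hgx.symm
  -- IVT
  set F : ℝ → ℝ := fun t => (⟪N t, C (N t)⟫).re / ‖N t‖^2 with hF
  have hNcont : Continuous N := by
    rw [hN]
    exact (Complex.continuous_ofReal.smul continuous_const).add
      ((Complex.continuous_ofReal.comp (continuous_const.sub continuous_id)).smul
        continuous_const)
  have hFcont : ContinuousOn F (Set.Icc 0 1) := by
    apply ContinuousOn.div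
    · exact (Complex.continuous_re.comp (hNcont.inner (C.continuous.comp hNcont))).continuousOn
    · exact ((hNcont.norm).pow 2).continuousOn
    · intro t ht
      exact pow_ne_zero 2 (norm_ne_zero_iff.mpr (hNnz t ht))
  have hF0 : F 0 = 0 := by
    have hN0 : N 0 = y' := by rw [hN]; simp
    rw [hF]
    simp only [hN0, hgy', hy'1]
    simp
  have hF1 : F 1 = 1 := by
    have hN1 : N 1 = x := by rw [hN]; simp
    rw [hF]
    simp only [hN1, hgx, hx1]
    simp
  have hsub := intermediate_value_Icc (zero_le_one) hFcont
  have hsmem : s ∈ Set.Icc (F 0) (F 1) := by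
    rw [hF0, hF1]; exact ⟨hs0, hs1⟩
  obtain ⟨t₀, ht₀mem, hFt₀⟩ := hsub hsmem
  have hNt₀ : N t₀ ≠ 0 := hNnz t₀ ht₀mem
  have hnrm : ‖N t₀‖ ≠ 0 := norm_ne_zero_iff.mpr hNt₀
  refine ⟨((‖N t₀‖⁻¹ : ℝ):ℂ) • N t₀, E.smul_mem _ (hNE t₀), ?_, ?_⟩
  · rw [norm_smul]
    simp [abs_of_nonneg (inv_nonneg.mpr (norm_nonneg _)), inv_mul_cancel₀ hnrm]
  · simp only [map_smul, inner_smul_left, inner_smul_right, Complex.conj_ofReal]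
    have him : (⟪N t₀, C (N t₀)⟫).im = 0 := by
      rw [hNexp t₀, Complex.add_im, Complex.ofReal_im, Complex.mul_im]
      simp [hrim]
    have hcomb : ((‖N t₀‖⁻¹ : ℝ) : ℂ) * (((‖N t₀‖⁻¹ : ℝ) : ℂ) * ⟪N t₀, C (N t₀)⟫)
        = ((‖N t₀‖⁻¹ * ‖N t₀‖⁻¹ : ℝ) : ℂ) * ⟪N t₀, C (N t₀)⟫ := by
      push_cast
      ring
    rw [hcomb]
    apply Complex.ext
    · rw [Complex.re_ofReal_mul]
      have hre : ‖N t₀‖⁻¹ * ‖N t₀‖⁻¹ * (⟪N t₀, C (N t₀)⟫).re = F t₀ := by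
        simp only [hF, pow_two]
        field_simp
      rw [hre, hFt₀, Complex.ofReal_re]
    · rw [Complex.im_ofReal_mul, him, Complex.ofReal_im, mul_zero]
  
/-- Convexity of the restricted numerical range. -/
lemma bs_numrange_convex (C : H →L[ℂ] H) (E : Submodule ℂ H) :
    Convex ℝ {w : ℂ | ∃ x : H, x ∈ E ∧ ‖x‖ = 1 ∧ ⟪x, C x⟫ = w} := by
  rintro a ⟨xa, hxaE, hxa1, hga⟩ b ⟨xb, hxbE, hxb1, hgb⟩ ta tb hta htb htab
  by_cases hab : a = b
  · subst hab
    refine ⟨xa, hxaE, hxa1, ?_⟩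
    rw [hga, ← add_smul, htab, one_smul]
  · set d := a - b with hd
    have hd0 : d ≠ 0 := sub_ne_zero.mpr hab
    set C' : H →L[ℂ] H := d⁻¹ • (C - b • 1) with hC'
    have hval : ∀ w : H, ‖w‖ = 1 → ⟪w, C' w⟫ = d⁻¹ * (⟪w, C w⟫ - b) := by
      intro w hw
      rw [hC']
      simp only [ContinuousLinearMap.smul_apply, ContinuousLinearMap.sub_apply,
        ContinuousLinearMap.smul_apply, ContinuousLinearMap.one_apply,
        inner_smul_right, inner_sub_right]
      have : ⟪w, w⟫ = (1:ℂ) := by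
        rw [inner_self_eq_norm_sq_to_K, hw]
        norm_num
      rw [this]
      ring
    have hgx' : ⟪xa, C' xa⟫ = 1 := by
      rw [hval xa hxa1, hga, ← hd, inv_mul_cancel₀ hd0]
    have hgy' : ⟪xb, C' xb⟫ = 0 := by
      rw [hval xb hxb1, hgb]
      simp
    have hta1 : ta ≤ 1 := by linarith
    obtain ⟨z, hzE, hz1, hgz⟩ := bs_TH_step C' E hxaE hxbE hxa1 hxb1 hgx' hgy' hta hta1
    refine ⟨z, hzE, hz1, ?_⟩
    have h1 : d⁻¹ * (⟪z, C z⟫ - b) = (ta:ℂ) := by rw [← hval z hz1, hgz]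
    have h2 : ⟪z, C z⟫ = b + (ta:ℂ) * d := by
      field_simp at h1
      linear_combination h1
    rw [h2, hd]
    have htb' : tb = 1 - ta := by linarith
    rw [htb']
    simp [Complex.real_smul]
    ring


end BirkhoffAux

open ContinuousLinearMap in
/-- On a finite-dimensional nontrivial complex Hilbert space `H`, `T` is Birkhoff–James
orthogonal to `S` iff there is a unit vector `ξ` with `|T|ξ = ‖T‖ξ` and `⟪Tξ, Sξ⟫ = 0`. -/
theorem birkhoff_orthogonal_iff_exists_unit_vector_finiteDimensional
    {H : Type*} [NormedAddCommGroup H] [InnerProductSpace ℂ H]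
    [FiniteDimensional ℂ H] [Nontrivial H] (T S : H →L[ℂ] H) :
    (∀ lam : ℂ, ‖T‖ ≤ ‖T + lam • S‖) ↔
      ∃ ξ : H, ‖ξ‖ = 1 ∧ CFC.sqrt (star T * T) ξ = ‖T‖ • ξ ∧
        (inner ℂ (T ξ) (S ξ) : ℂ) = 0 := by
  haveI : CompleteSpace H := FiniteDimensional.complete ℂ H
  constructor
  · intro horth
    set A := CFC.sqrt (star T * T) with hA
    set E : Submodule ℂ H := Module.End.eigenspace (↑A : H →ₗ[ℂ] H) ((‖T‖ : ℝ) : ℂ) with hE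
    set C : H →L[ℂ] H := (ContinuousLinearMap.adjoint T).comp S with hC
    have hCval : ∀ x : H, (inner ℂ x (C x) : ℂ) = (inner ℂ (T x) (S x) : ℂ) := by
      intro x
      rw [hC, ContinuousLinearMap.comp_apply]
      exact ContinuousLinearMap.adjoint_inner_right T x (S x)
    set W : Set ℂ := {w | ∃ x : H, x ∈ E ∧ ‖x‖ = 1 ∧ (inner ℂ x (C x) : ℂ) = w} with hW
    have hmemE : ∀ {x : H}, ‖x‖ = 1 → ‖T x‖ = ‖T‖ → x ∈ E := by
      intro x hx1 hTx
      rw [hE, Module.End.mem_eigenspace_iff]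
      show A x = ((‖T‖ : ℝ) : ℂ) • x
      rw [show ((‖T‖:ℝ):ℂ) = algebraMap ℝ ℂ ‖T‖ from rfl, algebraMap_smul]
      exact bs_eigen T hx1 hTx
    have hWprop : ∀ u : ℂ, ‖u‖ = 1 → ∃ w ∈ W, 0 ≤ (u * w).re := by
      intro u hu
      obtain ⟨x, hx1, hTx, hre⟩ := bs_key T S horth u hu
      exact ⟨inner ℂ x (C x), ⟨x, hmemE hx1 hTx, hx1, rfl⟩, by rw [hCval x]; exact hre⟩
    have hWconv : Convex ℝ W := bs_numrange_convex C E
    have hMcomp : IsCompact ((E : Set H) ∩ Metric.sphere 0 1) :=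
      (isCompact_sphere 0 1).inter_left (Submodule.closed_of_finiteDimensional E)
    have hWeq : W = (fun x : H => (inner ℂ x (C x) : ℂ)) '' ((E : Set H) ∩ Metric.sphere 0 1) := by
      ext w
      constructor
      · rintro ⟨x, hxE, hx1, hg⟩
        exact ⟨x, ⟨hxE, by simpa using hx1⟩, hg⟩
      · rintro ⟨x, ⟨hxE, hxs⟩, hg⟩
        exact ⟨x, hxE, by simpa using hxs, hg⟩
    have hWclosed : IsClosed W := by
      rw [hWeq]
      exact (hMcomp.image (continuous_id.inner (C.continuous))).isClosed
    have h0W : (0 : ℂ) ∈ W := by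
      by_contra h0
      obtain ⟨f, cc, hfc, hWf⟩ := geometric_hahn_banach_point_closed hWconv hWclosed h0
      rw [map_zero] at hfc
      set d : ℂ := ((f 1 : ℝ) : ℂ) - ((f Complex.I : ℝ) : ℂ) * Complex.I with hd
      have hfeq : ∀ w : ℂ, f w = (d * w).re := by
        intro w
        have hw : w = (w.re : ℝ) • (1 : ℂ) + (w.im : ℝ) • Complex.I := by
          rw [Complex.real_smul, Complex.real_smul, mul_one]
          exact (Complex.re_add_im w).symm
        calc f w = f ((w.re : ℝ) • (1 : ℂ) + (w.im : ℝ) • Complex.I) := by rw [← hw]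
        _ = w.re * f 1 + w.im * f Complex.I := by
            rw [map_add, map_smul, map_smul, smul_eq_mul, smul_eq_mul]
        _ = (d * w).re := by
            rw [hd]
            simp only [Complex.mul_re, Complex.sub_re, Complex.sub_im, Complex.mul_im,
              Complex.ofReal_re, Complex.ofReal_im, Complex.I_re, Complex.I_im]
            ring
      obtain ⟨w₀, hw₀W, _⟩ := hWprop 1 (by simp)
      have hd0 : d ≠ 0 := by
        intro hdz
        have h1 := hWf w₀ hw₀W
        have h2 : f w₀ = 0 := by rw [hfeq, hdz, zero_mul, Complex.zero_re]
        rw [h2] at h1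
        linarith
      have hdn : (0:ℝ) < ‖d‖ := norm_pos_iff.mpr hd0
      set u : ℂ := ((-(‖d‖⁻¹) : ℝ) : ℂ) * d with hu
      have hu1 : ‖u‖ = 1 := by
        rw [hu, norm_mul, Complex.norm_real, Real.norm_eq_abs, abs_neg,
          abs_of_nonneg (inv_nonneg.mpr (norm_nonneg d))]
        exact inv_mul_cancel₀ (norm_ne_zero_iff.mpr hd0)
      obtain ⟨w, hwW, hwre⟩ := hWprop u hu1
      have h1 : cc < f w := hWf w hwW
      have h3 : (u * w).re = -(‖d‖⁻¹) * (d * w).re := by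
        rw [hu, mul_assoc, Complex.re_ofReal_mul]
      rw [h3, ← hfeq] at hwre
      have hdinv : (0:ℝ) < ‖d‖⁻¹ := by positivity
      nlinarith
    obtain ⟨ξ, hξE, hξ1, hξg⟩ := h0W
    refine ⟨ξ, hξ1, ?_, ?_⟩
    · rw [hE, Module.End.mem_eigenspace_iff] at hξE
      have h2 : A ξ = ((‖T‖ : ℝ) : ℂ) • ξ := hξE
      rw [show ((‖T‖:ℝ):ℂ) = algebraMap ℝ ℂ ‖T‖ from rfl, algebraMap_smul] at h2
      exact h2
    · rw [← hCval ξ]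
      exact hξg
  · rintro ⟨ξ, hξ1, hξA, hξinner⟩ lam
    have hTξ : ‖T ξ‖ = ‖T‖ := by
      rw [← bs_sqrt_norm_apply T ξ, hξA, norm_smul, hξ1, mul_one, Real.norm_eq_abs,
        abs_of_nonneg (norm_nonneg T)]
    have h3 : (T + lam • S) ξ = T ξ + lam • S ξ := by simp
    have hexp : ‖(T + lam • S) ξ‖^2 = ‖T ξ‖^2 + ‖lam • S ξ‖^2 := by
      rw [h3, @norm_add_sq ℂ, inner_smul_right, hξinner, mul_zero]
      simp
    have h4 : ‖T ξ‖^2 ≤ ‖(T + lam • S) ξ‖^2 := by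
      rw [hexp]
      nlinarith [sq_nonneg ‖lam • S ξ‖]
    have h5 : ‖T ξ‖ ≤ ‖(T + lam • S) ξ‖ :=
      (pow_le_pow_iff_left₀ (norm_nonneg _) (norm_nonneg _) (by norm_num)).mp h4
    calc ‖T‖ = ‖T ξ‖ := hTξ.symm
    _ ≤ ‖(T + lam • S) ξ‖ := h5
    _ ≤ ‖T + lam • S‖ * ‖ξ‖ := (T + lam • S).le_opNorm ξ
    _ = ‖T + lam • S‖ := by rw [hξ1, mul_one]
end

section
/- Let H be a finite-dimensional complex Hilbert space, let H₀ ≠ {0} be a subspace of H, let P ∈ B(H) be the orthogonal projection onto H₀, and let S ∈ B(H). Then P is Birkhoff–James orthogonal to S if and only if there exists a unit vector ξ ∈ H₀ such that ⟨Sξ, ξ⟩ = 0. -/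
open Complex ComplexConjugate

local notation "⟪" x ", " y "⟫" => @inner ℂ _ _ x y

lemma expand_inner {H : Type*} [NormedAddCommGroup H] [InnerProductSpace ℂ H]
    (p q : ℝ) (x w x' w' : H) :
    ⟪(p:ℂ)•x' + (q:ℂ)•w', (p:ℂ)•x + (q:ℂ)•w⟫
      = (p:ℂ)^2 * ⟪x', x⟫ + (p:ℂ)*(q:ℂ)*⟪x', w⟫ + (p:ℂ)*(q:ℂ)*⟪w', x⟫ + (q:ℂ)^2*⟪w', w⟫ := by
  simp only [inner_add_left, inner_add_right, inner_smul_left, inner_smul_right,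
    Complex.conj_ofReal]
  ring

example : True := trivial

lemma exists_omega (u v : ℂ) : ∃ ω : ℂ, ‖ω‖ = 1 ∧ (ω * u + conj ω * v).im = 0 := by
  by_cases h : u - conj v = 0
  · refine ⟨1, by simp, ?_⟩
    have : u = conj v := by linear_combination h
    subst this
    simp [Complex.add_im]
  · set w := u - conj v with hw
    refine ⟨conj w / ‖w‖, ?_, ?_⟩
    · rw [norm_div]
      simp only [Complex.norm_conj, Complex.norm_real, Real.norm_eq_abs, abs_norm]
      exact div_self (by simpa using h)
    · have h1 : conj (conj w / (‖w‖:ℂ)) = w / ‖w‖ := by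
        simp [map_div₀]
      rw [h1]
      have h2 : conj w / (‖w‖:ℂ) * u + w / (‖w‖:ℂ) * v = (conj w * u + w * v) / ‖w‖ := by
        ring
      rw [h2]
      have key : conj w * u + w * v = ((‖u‖)^2 - (‖v‖)^2 : ℝ) := by
        have hu : ((‖u‖ : ℝ) : ℂ)^2 = conj u * u := by
          rw [← Complex.normSq_eq_conj_mul_self]; norm_cast; exact Complex.sq_norm u
        have hv : ((‖v‖ : ℝ) : ℂ)^2 = conj v * v := by
          rw [← Complex.normSq_eq_conj_mul_self]; norm_cast; exact Complex.sq_norm v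
        rw [hw]
        push_cast
        rw [map_sub, Complex.conj_conj]
        linear_combination hv - hu
      rw [key]
      rw [show ((‖u‖)^2 - (‖v‖)^2 : ℝ) / (‖w‖:ℂ)
            = (((‖u‖)^2 - (‖v‖)^2)/‖w‖ : ℝ) from by push_cast; ring]
      exact Complex.ofReal_im _


lemma seg_lemma {H : Type*} [NormedAddCommGroup H] [InnerProductSpace ℂ H]
    (H₀ : Submodule ℂ H) (S : H →L[ℂ] H) {x y : H} (hx : x ∈ H₀) (hy : y ∈ H₀)
    (hx1 : ‖x‖ = 1) (hy1 : ‖y‖ = 1) {t : ℝ} (ht0 : 0 ≤ t) (ht1 : t ≤ 1) :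
    ∃ z ∈ H₀, ‖z‖ = 1 ∧ ⟪S z, z⟫ = (1 - (t:ℂ)) * ⟪S x, x⟫ + (t:ℂ) * ⟪S y, y⟫ := by
  set a : ℂ := ⟪S x, x⟫ with ha
  set b : ℂ := ⟪S y, y⟫ with hb
  by_cases hab : a = b
  · exact ⟨x, hx, hx1, by rw [← ha, hab]; ring⟩
  · have hab' : a - b ≠ 0 := sub_ne_zero.mpr hab
    obtain ⟨ω, hω, him⟩ := exists_omega ((⟪S x, y⟫ - b * ⟪x, y⟫)/(a-b))
      ((⟪S y, x⟫ - b * ⟪y, x⟫)/(a-b))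
    set w : H := ω • y with hwdef
    have hwH : w ∈ H₀ := H₀.smul_mem ω hy
    have hw1 : ‖w‖ = 1 := by rw [hwdef, norm_smul, hω, hy1, one_mul]
    -- basic inner product values
    have hxx : ⟪x, x⟫ = 1 := by
      rw [inner_self_eq_norm_sq_to_K, hx1]; norm_num
    have hww : ⟪w, w⟫ = 1 := by
      rw [inner_self_eq_norm_sq_to_K, hw1]; norm_num
    have hSww : ⟪S w, w⟫ = b := by
      rw [hwdef, map_smul, inner_smul_left, inner_smul_right, ← mul_assoc, mul_comm ((starRingEnd ℂ) ω) ω, Complex.mul_conj]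
      have : Complex.normSq ω = 1 := by
        rw [Complex.normSq_eq_norm_sq, hω]; norm_num
      rw [this]; simp [hb]
    -- the real cross coefficient
    obtain ⟨c, him, hcross⟩ : ∃ c : ℂ, c.im = 0 ∧
        (⟪S x, w⟫ + ⟪S w, x⟫) - b * (⟪x, w⟫ + ⟪w, x⟫) = (a - b) * c := by
      refine ⟨_, him, ?_⟩
      rw [hwdef, map_smul, inner_smul_left, inner_smul_right, inner_smul_left,
        inner_smul_right]
      field_simp
      ring
    -- path
    set z : ℝ → H := fun s => ((1-s : ℝ):ℂ) • x + ((s:ℝ):ℂ) • w with hz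
    have hzH : ∀ s, z s ∈ H₀ := fun s => H₀.add_mem (H₀.smul_mem _ hx) (H₀.smul_mem _ hwH)
    have hcre : c = ((c.re : ℝ) : ℂ) := by
      apply Complex.ext <;> simp [him]
    set R : ℝ → ℝ := fun s => (1-s)^2 + (1-s)*s*c.re with hR
    have key : ∀ s : ℝ, ⟪S (z s), z s⟫ = b * ⟪z s, z s⟫ + (a-b) * ((R s : ℝ):ℂ) := by
      intro s
      have hSz : S (((1-s : ℝ):ℂ) • x + ((s:ℝ):ℂ) • w)
          = ((1-s : ℝ):ℂ) • S x + ((s:ℝ):ℂ) • S w := by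
        rw [map_add, map_smul, map_smul]
      have hzs : z s = ((1-s : ℝ):ℂ) • x + ((s:ℝ):ℂ) • w := rfl
      rw [hzs, hSz, expand_inner (1-s) s x w (S x) (S w), expand_inner (1-s) s x w x w]
      rw [← ha, hSww, hxx, hww]
      have hRs : ((R s : ℝ):ℂ) = ((1-s:ℝ):ℂ)^2 + ((1-s:ℝ):ℂ)*((s:ℝ):ℂ)*c := by
        rw [hR]
        push_cast [← hcre]
        try ring
      linear_combination (((1-s:ℝ):ℂ)*((s:ℝ):ℂ)) * hcross - (a-b) * hRs
    have hzne : ∀ s : ℝ, z s ≠ 0 := by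
      intro s h0
      have hzs : ((1-s : ℝ):ℂ) • x + ((s:ℝ):ℂ) • w = 0 := h0
      by_cases hs0 : s = 0
      · subst hs0
        simp at hzs
        rw [hzs] at hx1
        simp at hx1
      · have hsc : ((s:ℝ):ℂ) ≠ 0 := by exact_mod_cast hs0
        have h1 : ((s:ℝ):ℂ) • w = ((-(1-s)/s : ℝ):ℂ) • (((s:ℝ):ℂ) • x) := by
          have h2 : ((s:ℝ):ℂ) • w = -(((1-s:ℝ):ℂ) • x) :=
            eq_neg_of_add_eq_zero_right hzs
          rw [h2, smul_smul]
          push_cast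
          rw [← neg_smul]
          congr 1
          field_simp
        have hwd : w = ((-(1-s)/s : ℝ):ℂ) • x := by
          apply smul_right_injective H hsc
          show ((s:ℝ):ℂ) • w = ((s:ℝ):ℂ) • (((-(1-s)/s : ℝ):ℂ) • x)
          rw [h1, smul_comm]
        have hb2 : b = ((-(1-s)/s:ℝ):ℂ)^2 * a := by
          rw [← hSww, hwd, map_smul, inner_smul_left, inner_smul_right,
            Complex.conj_ofReal, ← ha]
          ring
        have hr1 : |(-(1-s)/s : ℝ)| = 1 := by
          have : ‖w‖ = |(-(1-s)/s : ℝ)| * ‖x‖ := by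
            rw [hwd, norm_smul, Complex.norm_real, Real.norm_eq_abs]
          rw [hw1, hx1, mul_one] at this
          exact this.symm
        have hr2 : ((-(1-s)/s:ℝ):ℂ)^2 = 1 := by
          have : ((-(1-s)/s : ℝ))^2 = 1 := by
            rw [← _root_.sq_abs, hr1]; norm_num
          calc ((-(1-s)/s:ℝ):ℂ)^2 = (((-(1-s)/s : ℝ)^2 : ℝ) : ℂ) := by push_cast; ring
            _ = 1 := by rw [this]; norm_num
        rw [hr2, one_mul] at hb2
        exact hab hb2.symm
    have hzcont : Continuous z := by
      rw [hz]; fun_prop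
    have hNpos : ∀ s : ℝ, (0:ℝ) < ‖z s‖ := fun s => norm_pos_iff.mpr (hzne s)
    set g : ℝ → ℝ := fun s => R s / ‖z s‖^2 with hg
    have hgcont : Continuous g := by
      apply Continuous.div
      · rw [hR]; fun_prop
      · fun_prop
      · intro s
        exact pow_ne_zero 2 (hNpos s).ne'
    have hz0 : z 0 = x := by rw [hz]; simp
    have hz1 : z 1 = w := by rw [hz]; simp
    have hg0 : g 0 = 1 := by
      rw [hg]; simp only [hz0, hx1, hR]; norm_num
    have hg1 : g 1 = 0 := by
      rw [hg]; simp only [hR]; norm_num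
    have hmem : (1 - t) ∈ Set.Icc (g 1) (g 0) := by
      rw [hg0, hg1]; constructor <;> simp <;> linarith
    obtain ⟨s₀, hs₀I, hgs₀⟩ :=
      intermediate_value_Icc' (by norm_num : (0:ℝ) ≤ 1) hgcont.continuousOn hmem
    have hN0 : ‖z s₀‖ ≠ 0 := (hNpos s₀).ne'
    refine ⟨((‖z s₀‖⁻¹ : ℝ):ℂ) • z s₀, H₀.smul_mem _ (hzH s₀), ?_, ?_⟩
    · rw [norm_smul, Complex.norm_real, Real.norm_eq_abs, abs_of_pos (by positivity),
        inv_mul_cancel₀ hN0]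
    · rw [map_smul, inner_smul_left, inner_smul_right, Complex.conj_ofReal, key s₀,
        inner_self_eq_norm_sq_to_K]
      have hNc : ((‖z s₀‖ : ℝ):ℂ) ≠ 0 := by exact_mod_cast hN0
      have hRt : ((R s₀ : ℝ):ℂ) = (1 - (t:ℂ)) * ((‖z s₀‖ : ℝ):ℂ)^2 := by
        have hr : R s₀ = (1-t) * ‖z s₀‖^2 := by
          rw [div_eq_iff (pow_ne_zero 2 hN0)] at hgs₀
          linarith [hgs₀]
        calc ((R s₀ : ℝ):ℂ) = (((1-t) * ‖z s₀‖^2 : ℝ) : ℂ) := by rw [hr]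
          _ = (1 - (t:ℂ)) * ((‖z s₀‖ : ℝ):ℂ)^2 := by push_cast; ring
      rw [hRt]
      rw [RCLike.ofReal_eq_complex_ofReal, Complex.ofReal_inv]
      field_simp
      ring


set_option maxHeartbeats 1000000 in
/-- Let `H` be a finite-dimensional complex Hilbert space, `H₀ ≠ {0}` a subspace, `P` the
orthogonal projection onto `H₀` and `S ∈ B(H)`. Then `P` is Birkhoff–James orthogonal to `S`
iff there is a unit vector `ξ ∈ H₀` with `⟪Sξ, ξ⟫ = 0`. -/
theorem projection_birkhoff_orthogonal_iff_finiteDimensional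
    {H : Type*} [NormedAddCommGroup H] [InnerProductSpace ℂ H] [FiniteDimensional ℂ H]
    (H₀ : Submodule ℂ H) (hH₀ : H₀ ≠ ⊥) (P S : H →L[ℂ] H)
    (hP : ∀ ξ : H, P ξ ∈ H₀ ∧ ξ - P ξ ∈ H₀ᗮ) :
    (∀ lam : ℂ, ‖P‖ ≤ ‖P + lam • S‖) ↔
      ∃ ξ ∈ H₀, ‖ξ‖ = 1 ∧ (inner ℂ (S ξ) ξ : ℂ) = 0 := by
  -- basic facts about P
  have hPfix : ∀ ξ ∈ H₀, P ξ = ξ := by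
    intro ξ hξ
    have h1 : ξ - P ξ ∈ H₀ := H₀.sub_mem hξ (hP ξ).1
    have h2 : (inner ℂ (ξ - P ξ) (ξ - P ξ) : ℂ) = 0 :=
      Submodule.inner_right_of_mem_orthogonal h1 (hP ξ).2
    have h3 : ξ - P ξ = 0 := inner_self_eq_zero.mp h2
    have := sub_eq_zero.mp h3
    exact this.symm
  have hpyth : ∀ ξ : H, ‖P ξ‖^2 + ‖ξ - P ξ‖^2 = ‖ξ‖^2 := by
    intro ξ
    have horth : (inner ℂ (P ξ) (ξ - P ξ) : ℂ) = 0 :=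
      Submodule.inner_right_of_mem_orthogonal (hP ξ).1 (hP ξ).2
    have h4 := norm_add_sq (𝕜 := ℂ) (P ξ) (ξ - P ξ)
    rw [horth] at h4
    simp only [map_zero, mul_zero, add_zero, zero_mul] at h4
    rw [add_sub_cancel] at h4
    linarith [h4]
  have hPle : ∀ ξ : H, ‖P ξ‖ ≤ ‖ξ‖ := by
    intro ξ
    have := hpyth ξ
    have h5 : ‖P ξ‖^2 ≤ ‖ξ‖^2 := by nlinarith [sq_nonneg ‖ξ - P ξ‖]
    nlinarith [norm_nonneg (P ξ), norm_nonneg ξ]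
  -- a unit vector in H₀
  obtain ⟨v, hvH, hv0⟩ := Submodule.exists_mem_ne_zero_of_ne_bot hH₀
  have hv0' : ‖v‖ ≠ 0 := norm_ne_zero_iff.mpr hv0
  set e : H := ((‖v‖⁻¹ : ℝ):ℂ) • v with he
  have heH : e ∈ H₀ := H₀.smul_mem _ hvH
  have he1 : ‖e‖ = 1 := by
    rw [he, norm_smul, Complex.norm_real, Real.norm_eq_abs,
      abs_of_pos (by positivity), inv_mul_cancel₀ hv0']
  have hPnorm_ge : (1:ℝ) ≤ ‖P‖ := by
    have h1 : ‖P e‖ ≤ ‖P‖ * ‖e‖ := P.le_opNorm e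
    rw [hPfix e heH, he1, mul_one] at h1
    exact h1
  constructor
  · -- hard direction
    intro hBJ
    by_contra hno
    push_neg at hno
    -- the restricted numerical range
    set K : Set H := {ξ : H | ξ ∈ H₀ ∧ ‖ξ‖ = 1} with hK
    set W : Set ℂ := (fun ξ => (inner ℂ (S ξ) ξ : ℂ)) '' K with hW
    have hWconv : Convex ℝ W := by
      rintro c₁ ⟨x, ⟨hxH, hx1⟩, rfl⟩ c₂ ⟨y, ⟨hyH, hy1⟩, rfl⟩ α β hα hβ hαβ
      obtain ⟨z, hzH, hz1, hzv⟩ := seg_lemma H₀ S hxH hyH hx1 hy1 hβ (by linarith)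
      refine ⟨z, ⟨hzH, hz1⟩, ?_⟩
      show (inner ℂ (S z) z : ℂ) = α • (inner ℂ (S x) x : ℂ) + β • (inner ℂ (S y) y : ℂ)
      rw [hzv]
      have hcast : (1 : ℂ) - (β:ℂ) = (α:ℂ) := by
        have hh : α = 1 - β := by linarith
        rw [hh]; push_cast; ring
      rw [hcast]
      simp [Complex.real_smul]
    have hKclosed : IsClosed K := by
      have h1 : IsClosed (H₀ : Set H) := Submodule.closed_of_finiteDimensional H₀
      have h2 : IsClosed {ξ : H | ‖ξ‖ = 1} :=
        isClosed_eq continuous_norm continuous_const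
      exact h1.inter h2
    have hKsub : K ⊆ Metric.sphere (0:H) 1 := by
      rintro ξ ⟨hξH, hξ1⟩
      simpa [mem_sphere_zero_iff_norm] using hξ1
    have hKcompact : IsCompact K := (isCompact_sphere (0:H) 1).of_isClosed_subset hKclosed hKsub
    have hWcompact : IsCompact W :=
      hKcompact.image (Continuous.inner S.continuous continuous_id)
    have hW0 : (0:ℂ) ∉ W := by
      rintro ⟨ξ, ⟨hξH, hξ1⟩, h0⟩
      exact hno ξ hξH hξ1 h0
    obtain ⟨f, u, hfu0, hfu⟩ :=
      geometric_hahn_banach_point_closed hWconv hWcompact.isClosed hW0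
    have hu0 : 0 < u := by simpa using hfu0
    obtain ⟨κ, hκ⟩ : ∃ κ : ℂ, ∀ c : ℂ, (κ * c).re = f c := by
      refine ⟨((f 1 : ℝ) : ℂ) - ((f Complex.I : ℝ) : ℂ) * Complex.I, fun c => ?_⟩
      have hfc : f c = c.re * f 1 + c.im * f Complex.I := by
        have hc2 : c = c.re • (1:ℂ) + c.im • Complex.I := by
          simp [Complex.real_smul, Complex.re_add_im]
        conv_lhs => rw [hc2]
        rw [map_add, map_smul, map_smul]
        simp [smul_eq_mul]
      rw [hfc]
      simp [Complex.mul_re, Complex.sub_re, Complex.sub_im, Complex.mul_im,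
        Complex.ofReal_re, Complex.ofReal_im, Complex.I_re, Complex.I_im]
      ring
    have hsep : ∀ ξ ∈ H₀, ‖ξ‖ = 1 → u < (κ * inner ℂ (S ξ) ξ).re := by
      intro ξ hξ h1
      rw [hκ]
      exact hfu _ ⟨ξ, ⟨hξ, h1⟩, rfl⟩
    obtain ⟨T, hTapp⟩ : ∃ T : H →L[ℂ] H, ∀ ξ : H, T ξ = (starRingEnd ℂ) κ • S ξ :=
      ⟨(starRingEnd ℂ) κ • S, fun ξ => rfl⟩
    have hTval : ∀ ξ : H, (inner ℂ (T ξ) ξ : ℂ) = κ * inner ℂ (S ξ) ξ := by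
      intro ξ
      rw [hTapp, inner_smul_left]
      simp
    have hquad : ∀ η ∈ H₀, u * ‖η‖^2 ≤ (inner ℂ (T η) η : ℂ).re := by
      intro η hη
      rcases eq_or_ne η 0 with h0 | h0
      · simp [h0]
      · have hn : ‖η‖ ≠ 0 := norm_ne_zero_iff.mpr h0
        have hη'H : ((‖η‖⁻¹ : ℝ):ℂ) • η ∈ H₀ := H₀.smul_mem _ hη
        have hη'1 : ‖((‖η‖⁻¹ : ℝ):ℂ) • η‖ = 1 := by
          rw [norm_smul, Complex.norm_real, Real.norm_eq_abs,
            abs_of_pos (by positivity), inv_mul_cancel₀ hn]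
        have h2 := hsep _ hη'H hη'1
        rw [← hTval] at h2
        have h3 : (inner ℂ (T (((‖η‖⁻¹ : ℝ):ℂ) • η)) (((‖η‖⁻¹ : ℝ):ℂ) • η) : ℂ)
            = (((‖η‖⁻¹)^2 : ℝ):ℂ) * inner ℂ (T η) η := by
          rw [map_smul, inner_smul_left, inner_smul_right, Complex.conj_ofReal]
          push_cast
          ring
        rw [h3] at h2
        have h4 : ((((‖η‖⁻¹)^2 : ℝ):ℂ) * inner ℂ (T η) η).re
            = (‖η‖⁻¹)^2 * (inner ℂ (T η) η : ℂ).re := by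
          rw [Complex.re_ofReal_mul]
        rw [h4] at h2
        have h5 : 0 < ‖η‖ := by positivity
        have h6 : u * ‖η‖^2 < (inner ℂ (T η) η : ℂ).re := by
          have h7 : u * ‖η‖^2 < ((‖η‖⁻¹)^2 * (inner ℂ (T η) η : ℂ).re) * ‖η‖^2 := by
            apply mul_lt_mul_of_pos_right h2 (by positivity)
          have h8 : ((‖η‖⁻¹)^2 * (inner ℂ (T η) η : ℂ).re) * ‖η‖^2
              = (inner ℂ (T η) η : ℂ).re := by
            field_simp
          linarith [h7, h8.symm.le]
        linarith
    -- constants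
    obtain ⟨M, hM1, hTM⟩ : ∃ M : ℝ, 1 ≤ M ∧ ∀ ξ : H, ‖T ξ‖ ≤ M * ‖ξ‖ := by
      refine ⟨‖T‖ + 1, by linarith [norm_nonneg T], fun ξ => ?_⟩
      calc ‖T ξ‖ ≤ ‖T‖ * ‖ξ‖ := T.le_opNorm ξ
        _ ≤ (‖T‖ + 1) * ‖ξ‖ := by
            apply mul_le_mul_of_nonneg_right _ (norm_nonneg ξ)
            linarith
    have hM0 : 0 < M := by linarith
    obtain ⟨t, ht0, h3t, h3t'⟩ :
        ∃ t : ℝ, 0 < t ∧ 3*t^2*M^2 ≤ t*u/2 ∧ 3*t^2*M^2 ≤ 3/16 := by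
      refine ⟨min (u / (6*M^2)) (1/(4*M)), lt_min (by positivity) (by positivity), ?_, ?_⟩
      · have htu : min (u / (6*M^2)) (1/(4*M)) ≤ u / (6*M^2) := min_le_left _ _
        have htp : 0 < min (u / (6*M^2)) (1/(4*M)) := lt_min (by positivity) (by positivity)
        set q := min (u / (6*M^2)) (1/(4*M))
        have h1 : q * (6*M^2) ≤ u := by
          rw [← le_div_iff₀ (by positivity)]
          exact htu
        nlinarith [mul_le_mul_of_nonneg_left h1 htp.le]
      · have htM : min (u / (6*M^2)) (1/(4*M)) ≤ 1/(4*M) := min_le_right _ _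
        have htp : 0 < min (u / (6*M^2)) (1/(4*M)) := lt_min (by positivity) (by positivity)
        set q := min (u / (6*M^2)) (1/(4*M))
        have h1 : q * (4*M) ≤ 1 := by
          rw [le_div_iff₀ (by positivity)] at htM
          linarith
        nlinarith [mul_le_mul h1 h1 (by positivity) (by norm_num : (0:ℝ) ≤ 1)]
    obtain ⟨ε, hε0, hε1, hε2⟩ : ∃ ε : ℝ, 0 < ε ∧ ε ≤ t*u/2 ∧ ε ≤ 1/16 :=
      ⟨min (t*u/2) (1/16), lt_min (by positivity) (by norm_num), min_le_left _ _,
        min_le_right _ _⟩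
    -- pointwise estimate on unit vectors
    have hpt : ∀ ξ : H, ‖ξ‖ = 1 → ‖P ξ - ((t:ℝ):ℂ) • T ξ‖^2 ≤ 1 - ε := by
      intro ξ hξ1
      have hA0 : (0:ℝ) ≤ ‖P ξ‖ := norm_nonneg _
      have hB0 : (0:ℝ) ≤ ‖ξ - P ξ‖ := norm_nonneg _
      have hAB : ‖P ξ‖^2 + ‖ξ - P ξ‖^2 = 1 := by
        have h1 := hpyth ξ
        rw [hξ1] at h1
        simpa using h1
      have hA1 : ‖P ξ‖ ≤ 1 := by nlinarith
      have hB1 : ‖ξ - P ξ‖ ≤ 1 := by nlinarith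
      -- expansion of the squared norm
      have hexp : ‖P ξ - ((t:ℝ):ℂ) • T ξ‖^2
          = ‖P ξ‖^2 - 2 * (t * (inner ℂ (P ξ) (T ξ) : ℂ).re) + t^2 * ‖T ξ‖^2 := by
        rw [norm_sub_sq (𝕜 := ℂ), inner_smul_right, norm_smul]
        simp [Complex.re_ofReal_mul]
        rw [← _root_.sq_abs t]
        ring
      -- lower bound on the real part
      have hsplit : (inner ℂ (P ξ) (T ξ) : ℂ).re = (inner ℂ (T (P ξ)) (P ξ) : ℂ).re
          + (inner ℂ (T (ξ - P ξ)) (P ξ) : ℂ).re := by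
        have h1 : T ξ = T (P ξ) + T (ξ - P ξ) := by
          rw [← map_add]
          congr 1
          abel
        have hsym : ∀ p q : H, (inner ℂ p q : ℂ).re = (inner ℂ q p : ℂ).re := by
          intro p q
          rw [← inner_conj_symm]
          exact Complex.conj_re _
        rw [h1, inner_add_right, Complex.add_re, hsym (P ξ) (T (P ξ)),
          hsym (P ξ) (T (ξ - P ξ))]
      have hq : u * ‖P ξ‖^2 ≤ (inner ℂ (T (P ξ)) (P ξ) : ℂ).re :=
        hquad (P ξ) (hP ξ).1
      have hcr : -(M * ‖ξ - P ξ‖ * ‖P ξ‖) ≤ (inner ℂ (T (ξ - P ξ)) (P ξ) : ℂ).re := by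
        have h1 : |(inner ℂ (T (ξ - P ξ)) (P ξ) : ℂ).re| ≤ ‖(inner ℂ (T (ξ - P ξ)) (P ξ) : ℂ)‖ :=
          Complex.abs_re_le_norm _
        have h2 : ‖(inner ℂ (T (ξ - P ξ)) (P ξ) : ℂ)‖ ≤ ‖T (ξ - P ξ)‖ * ‖P ξ‖ := by
          exact norm_inner_le_norm _ _
        have h3 : ‖T (ξ - P ξ)‖ * ‖P ξ‖ ≤ (M * ‖ξ - P ξ‖) * ‖P ξ‖ :=
          mul_le_mul_of_nonneg_right (hTM _) hA0
        have h4 := abs_le.mp (h1.trans (h2.trans h3))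
        linarith [h4.1]
      have hTξ : ‖T ξ‖ ≤ M := by
        have := hTM ξ
        rwa [hξ1, mul_one] at this
      have hTξ2 : t^2 * ‖T ξ‖^2 ≤ t^2 * M^2 := by
        have h1 : ‖T ξ‖^2 ≤ M^2 := pow_le_pow_left₀ (norm_nonneg (T ξ)) hTξ 2
        exact mul_le_mul_of_nonneg_left h1 (sq_nonneg t)
      rw [hexp]
      have hre : u * ‖P ξ‖^2 - M * ‖ξ - P ξ‖ * ‖P ξ‖ ≤ (inner ℂ (P ξ) (T ξ) : ℂ).re := by
        rw [hsplit]
        linarith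
      -- case split
      rcases le_or_gt (1/2 : ℝ) (‖P ξ‖^2) with hcase | hcase
      · -- large projection part
        nlinarith [sq_nonneg (‖ξ - P ξ‖ - 2*t*M*‖P ξ‖), mul_le_mul_of_nonneg_left hre (mul_pos (by norm_num : (0:ℝ) < 2) ht0).le, sq_nonneg (t*M), mul_pos ht0 hu0]
      · -- large orthogonal part
        have hb2 : (1/2 : ℝ) ≤ ‖ξ - P ξ‖^2 := by nlinarith
        nlinarith [sq_nonneg (‖ξ - P ξ‖ - 2*t*M*‖P ξ‖), mul_le_mul_of_nonneg_left hre (mul_pos (by norm_num : (0:ℝ) < 2) ht0).le, mul_pos ht0 hu0, mul_nonneg (mul_nonneg ht0.le hu0.le) (sq_nonneg ‖P ξ‖)]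
    -- conclude
    have hC0 : (0:ℝ) ≤ Real.sqrt (1 - ε) := Real.sqrt_nonneg _
    have happ : ∀ ξ : H, (P + (-((t:ℝ):ℂ) * (starRingEnd ℂ) κ) • S) ξ
        = P ξ - ((t:ℝ):ℂ) • T ξ := by
      intro ξ
      rw [ContinuousLinearMap.add_apply, ContinuousLinearMap.smul_apply, hTapp,
        smul_smul, sub_eq_add_neg, ← neg_smul, neg_mul]
    have hbound : ‖P + (-((t:ℝ):ℂ) * (starRingEnd ℂ) κ) • S‖ ≤ Real.sqrt (1 - ε) := by
      apply ContinuousLinearMap.opNorm_le_bound _ hC0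
      intro ξ
      rcases eq_or_ne ξ 0 with rfl | hξ0
      · simp
      · have hn : ‖ξ‖ ≠ 0 := norm_ne_zero_iff.mpr hξ0
        have hξ'1 : ‖((‖ξ‖⁻¹:ℝ):ℂ) • ξ‖ = 1 := by
          rw [norm_smul, Complex.norm_real, Real.norm_eq_abs,
            abs_of_pos (by positivity), inv_mul_cancel₀ hn]
        have h1 : ‖(P + (-((t:ℝ):ℂ) * (starRingEnd ℂ) κ) • S) (((‖ξ‖⁻¹:ℝ):ℂ) • ξ)‖^2
            ≤ 1 - ε := by
          rw [happ]
          exact hpt _ hξ'1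
        have h2 : ‖(P + (-((t:ℝ):ℂ) * (starRingEnd ℂ) κ) • S) (((‖ξ‖⁻¹:ℝ):ℂ) • ξ)‖
            ≤ Real.sqrt (1 - ε) := by
          rw [← Real.sqrt_sq (norm_nonneg _)]
          exact Real.sqrt_le_sqrt h1
        have h3 : (P + (-((t:ℝ):ℂ) * (starRingEnd ℂ) κ) • S) ξ
            = ((‖ξ‖:ℝ):ℂ) • (P + (-((t:ℝ):ℂ) * (starRingEnd ℂ) κ) • S) (((‖ξ‖⁻¹:ℝ):ℂ) • ξ) := by
          rw [← map_smul, smul_smul]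
          congr 1
          have h4 : ((‖ξ‖:ℝ):ℂ) * ((‖ξ‖⁻¹:ℝ):ℂ) = 1 := by
            push_cast
            have hnc : (‖ξ‖ : ℂ) ≠ 0 := by exact_mod_cast hn
            field_simp
          rw [h4, one_smul]
        rw [h3, norm_smul, Complex.norm_real, Real.norm_eq_abs, abs_of_pos (by positivity)]
        rw [mul_comm]
        exact mul_le_mul_of_nonneg_right h2 (norm_nonneg ξ)
    have hlt : Real.sqrt (1 - ε) < 1 := by
      have h1 : (1:ℝ) - ε < 1 := by linarith
      have h2 : (0:ℝ) ≤ 1 - ε := by linarith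
      calc Real.sqrt (1 - ε) < Real.sqrt 1 := Real.sqrt_lt_sqrt h2 h1
        _ = 1 := Real.sqrt_one
    have hfin := (hBJ (-((t:ℝ):ℂ) * (starRingEnd ℂ) κ)).trans hbound
    linarith
  · -- easy direction
    rintro ⟨ξ, hξH, hξ1, hξ0⟩ lam
    have hval : (inner ℂ ((P + lam • S) ξ) ξ : ℂ) = 1 := by
      rw [ContinuousLinearMap.add_apply, ContinuousLinearMap.smul_apply,
        inner_add_left, inner_smul_left, hξ0, mul_zero, add_zero, hPfix ξ hξH,
        inner_self_eq_norm_sq_to_K, hξ1]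
      norm_num
    have h2 : (1:ℝ) ≤ ‖(P + lam • S) ξ‖ := by
      have h3 := norm_inner_le_norm (𝕜 := ℂ) ((P + lam • S) ξ) ξ
      rw [hval, hξ1, mul_one] at h3
      simpa using h3
    have h4 : ‖(P + lam • S) ξ‖ ≤ ‖P + lam • S‖ := by
      have := (P + lam • S).le_opNorm ξ
      rwa [hξ1, mul_one] at this
    calc ‖P‖ ≤ 1 := by
          apply P.opNorm_le_bound zero_le_one
          intro ξ'; rw [one_mul]; exact hPle ξ'
      _ ≤ ‖P + lam • S‖ := le_trans h2 h4
end

section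
/- Let H be a nontrivial complex Hilbert space and T, S ∈ B(H). The following are equivalent: (i) T is Birkhoff–James orthogonal to S; (ii) ∥T + λS∥² ≥ ∥T∥² + |λ|²·m(S)² for every λ ∈ ℂ, where m(S) = inf{∥Sξ∥ : ξ ∈ H, ∥ξ∥ = 1} is the minimum modulus of S. -/
open scoped InnerProductSpace

set_option maxHeartbeats 1000000

private lemma bj_key {H : Type*} [NormedAddCommGroup H] [InnerProductSpace ℂ H] [Nontrivial H]
    (T S : H →L[ℂ] H) (h : ∀ lam : ℂ, ‖T‖ ≤ ‖T + lam • S‖) (lam : ℂ) (δ : ℝ) (hδ : 0 < δ) :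
    ∃ ξ : H, ‖ξ‖ = 1 ∧ ‖T‖ ^ 2 - δ ≤ ‖T ξ‖ ^ 2 ∧ -δ ≤ Complex.re ⟪T ξ, lam • S ξ⟫_ℂ := by
  by_contra hcon
  push_neg at hcon
  set K := ‖lam • S‖ with hK
  have hK0 : 0 ≤ K := norm_nonneg _
  set D : ℝ := 2 * ‖T‖ * K + K ^ 2 + 1 with hD
  have hD0 : 0 < D := by positivity
  have hKD : K ^ 2 ≤ D := by nlinarith [norm_nonneg T]
  set t : ℝ := min 1 (δ / (2 * D)) with ht
  have ht0 : 0 < t := lt_min one_pos (by positivity)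
  have ht1 : t ≤ 1 := min_le_left _ _
  have htD : t * D ≤ δ / 2 := by
    have h1 : t ≤ δ / (2 * D) := min_le_right _ _
    calc t * D ≤ (δ / (2 * D)) * D := by nlinarith
    _ = δ / 2 := by field_simp
  have htK : t * K ^ 2 ≤ δ := by nlinarith [mul_le_mul_of_nonneg_left hKD ht0.le]
  set η : ℝ := min (t * δ) (δ / 2) with hη
  have hη0 : 0 < η := lt_min (by positivity) (by positivity)
  -- per unit vector bound
  have hunit : ∀ ξ : H, ‖ξ‖ = 1 → ‖(T + ((t : ℂ) * lam) • S) ξ‖ ^ 2 ≤ ‖T‖ ^ 2 - η := by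
    intro ξ hξ
    have happ : (T + ((t : ℂ) * lam) • S) ξ = T ξ + (t : ℂ) • (lam • S ξ) := by
      simp [mul_smul]
    rw [happ]
    have hexp : ‖T ξ + (t : ℂ) • (lam • S ξ)‖ ^ 2
        = ‖T ξ‖ ^ 2 + 2 * (t * Complex.re ⟪T ξ, lam • S ξ⟫_ℂ) + t ^ 2 * ‖lam • S ξ‖ ^ 2 := by
      rw [@norm_add_sq ℂ, inner_smul_right]
      simp only [RCLike.re_to_complex, Complex.mul_re, Complex.ofReal_re, Complex.ofReal_im,
        norm_smul, Complex.norm_real, Real.norm_eq_abs, abs_of_pos ht0]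
      ring
    rw [hexp]
    have hw : ‖lam • S ξ‖ ≤ K := by
      have := (lam • S).le_opNorm ξ
      simpa [hξ] using this
    have hTξ : ‖T ξ‖ ≤ ‖T‖ := by
      have := T.le_opNorm ξ
      simpa [hξ] using this
    have hw2 : ‖lam • S ξ‖ ^ 2 ≤ K ^ 2 := by nlinarith [norm_nonneg (lam • S ξ)]
    have hr : Complex.re ⟪T ξ, lam • S ξ⟫_ℂ ≤ ‖T‖ * K := by
      calc Complex.re ⟪T ξ, lam • S ξ⟫_ℂ ≤ ‖⟪T ξ, lam • S ξ⟫_ℂ‖ := Complex.re_le_norm _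
      _ = ‖⟪T ξ, lam • S ξ⟫_ℂ‖ := rfl
      _ ≤ ‖T ξ‖ * ‖lam • S ξ‖ := norm_inner_le_norm _ _
      _ ≤ ‖T‖ * K := by nlinarith [norm_nonneg (T ξ), norm_nonneg (lam • S ξ)]
    by_cases hcase : ‖T‖ ^ 2 - δ ≤ ‖T ξ‖ ^ 2
    · have hneg := hcon ξ hξ hcase
      have h1 : η ≤ t * δ := min_le_left _ _
      have hTξ2 : ‖T ξ‖ ^ 2 ≤ ‖T‖ ^ 2 := by nlinarith [norm_nonneg (T ξ)]
      have ht2 : t ^ 2 * ‖lam • S ξ‖ ^ 2 ≤ t * (t * K ^ 2) := by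
        calc t ^ 2 * ‖lam • S ξ‖ ^ 2 ≤ t ^ 2 * K ^ 2 :=
              mul_le_mul_of_nonneg_left hw2 (sq_nonneg t)
        _ = t * (t * K ^ 2) := by ring
      have f1 : t * Complex.re ⟪T ξ, lam • S ξ⟫_ℂ ≤ t * (-δ) :=
        mul_le_mul_of_nonneg_left hneg.le ht0.le
      have f2 : t * (t * K ^ 2) ≤ t * δ := mul_le_mul_of_nonneg_left htK ht0.le
      have f3 : t * (-δ) = -(t * δ) := by ring
      linarith
    · push_neg at hcase
      have h2 : η ≤ δ / 2 := min_le_right _ _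
      have ht2 : t ^ 2 * ‖lam • S ξ‖ ^ 2 ≤ t * K ^ 2 := by
        calc t ^ 2 * ‖lam • S ξ‖ ^ 2 ≤ t ^ 2 * K ^ 2 :=
              mul_le_mul_of_nonneg_left hw2 (sq_nonneg t)
        _ = (t * t) * K ^ 2 := by ring
        _ ≤ (1 * t) * K ^ 2 := by
              have : t * t ≤ 1 * t := mul_le_mul_of_nonneg_right ht1 ht0.le
              nlinarith
        _ = t * K ^ 2 := by ring
      have f1 : t * Complex.re ⟪T ξ, lam • S ξ⟫_ℂ ≤ t * (‖T‖ * K) :=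
        mul_le_mul_of_nonneg_left hr ht0.le
      have hDexp : t * D = 2 * (t * (‖T‖ * K)) + t * K ^ 2 + t := by rw [hD]; ring
      linarith
  -- get a unit vector and derive contradiction
  obtain ⟨x0, hx0⟩ := exists_ne (0 : H)
  have hξ0 : ‖(‖x0‖⁻¹ : ℂ) • x0‖ = 1 := by
    simp [norm_smul, inv_mul_cancel₀ (norm_ne_zero_iff.mpr hx0)]
  have hge0 : (0:ℝ) ≤ ‖T‖ ^ 2 - η := le_trans (by positivity) (hunit _ hξ0)
  set c : ℝ := Real.sqrt (‖T‖ ^ 2 - η) with hc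
  have hc2 : c ^ 2 = ‖T‖ ^ 2 - η := Real.sq_sqrt hge0
  have hopbd : ‖T + ((t : ℂ) * lam) • S‖ ≤ c := by
    refine ContinuousLinearMap.opNorm_le_bound _ (Real.sqrt_nonneg _) ?_
    intro x
    rcases eq_or_ne x 0 with rfl | hx
    · simp
    · have hxn : (‖x‖ : ℂ) ≠ 0 := by
        exact_mod_cast norm_ne_zero_iff.mpr hx
      set ξ : H := (‖x‖⁻¹ : ℂ) • x with hξdef
      have hξ : ‖ξ‖ = 1 := by
        simp [hξdef, norm_smul, inv_mul_cancel₀ (norm_ne_zero_iff.mpr hx)]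
      have hAξ : ‖(T + ((t : ℂ) * lam) • S) ξ‖ ≤ c := by
        have h1 := hunit ξ hξ
        have h2 := Real.sqrt_le_sqrt h1
        rwa [Real.sqrt_sq (norm_nonneg _), ← hc] at h2
      have hxξ : x = (‖x‖ : ℂ) • ξ := by
        rw [hξdef, smul_smul, mul_inv_cancel₀ hxn, one_smul]
      calc ‖(T + ((t : ℂ) * lam) • S) x‖
          = ‖x‖ * ‖(T + ((t : ℂ) * lam) • S) ξ‖ := by
            conv_lhs => rw [hxξ]
            rw [map_smul, norm_smul]
            simp
      _ ≤ ‖x‖ * c := mul_le_mul_of_nonneg_left hAξ (norm_nonneg x)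
      _ = c * ‖x‖ := mul_comm _ _
  have hT : ‖T‖ ≤ c := le_trans (h ((t : ℂ) * lam)) hopbd
  have : ‖T‖ ^ 2 ≤ ‖T‖ ^ 2 - η := by
    calc ‖T‖ ^ 2 ≤ c ^ 2 := by nlinarith [norm_nonneg T]
    _ = ‖T‖ ^ 2 - η := hc2
  linarith

/-- For operators `T, S` on a nontrivial complex Hilbert space `H`, `T` is Birkhoff–James
orthogonal to `S` iff `‖T + λS‖² ≥ ‖T‖² + |λ|² m(S)²` for all `λ ∈ ℂ`, where
`m(S) = inf {‖Sξ‖ : ‖ξ‖ = 1}` is the minimum modulus of `S`. -/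
theorem birkhoff_orthogonal_iff_pythagorean_minimum_modulus
    {H : Type*} [NormedAddCommGroup H] [InnerProductSpace ℂ H] [CompleteSpace H] [Nontrivial H]
    (T S : H →L[ℂ] H) (m : ℝ) (hm : m = ⨅ ξ : {ξ : H // ‖ξ‖ = 1}, ‖S ξ.1‖) :
    (∀ lam : ℂ, ‖T‖ ≤ ‖T + lam • S‖) ↔
      ∀ lam : ℂ, ‖T‖ ^ 2 + ‖lam‖ ^ 2 * m ^ 2 ≤ ‖T + lam • S‖ ^ 2 := by
  have hne : Nonempty {ξ : H // ‖ξ‖ = 1} := by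
    obtain ⟨x0, hx0⟩ := exists_ne (0 : H)
    exact ⟨⟨(‖x0‖⁻¹ : ℂ) • x0, by
      simp [norm_smul, inv_mul_cancel₀ (norm_ne_zero_iff.mpr hx0)]⟩⟩
  have hbdd : BddBelow (Set.range fun ξ : {ξ : H // ‖ξ‖ = 1} => ‖S ξ.1‖) := by
    refine ⟨0, ?_⟩
    rintro y ⟨i, rfl⟩
    exact norm_nonneg _
  have hm0 : 0 ≤ m := hm ▸ le_ciInf fun i => norm_nonneg _
  have hmle : ∀ ξ : H, ‖ξ‖ = 1 → m ≤ ‖S ξ‖ := by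
    intro ξ hξ
    rw [hm]
    exact ciInf_le hbdd ⟨ξ, hξ⟩
  constructor
  · intro h lam
    refine le_of_forall_pos_le_add ?_
    intro ε hε
    obtain ⟨ξ, hξ, hT2, hre⟩ := bj_key T S h lam (ε / 3) (by positivity)
    have happ : (T + lam • S) ξ = T ξ + lam • S ξ := by
      simp
    have hAξ : ‖(T + lam • S) ξ‖ ≤ ‖T + lam • S‖ := by
      have := (T + lam • S).le_opNorm ξ
      simpa [hξ] using this
    have hexp : ‖T ξ + lam • S ξ‖ ^ 2
        = ‖T ξ‖ ^ 2 + 2 * Complex.re ⟪T ξ, lam • S ξ⟫_ℂ + ‖lam‖ ^ 2 * ‖S ξ‖ ^ 2 := by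
      rw [@norm_add_sq ℂ, norm_smul]
      simp only [RCLike.re_to_complex]
      ring
    have hm2 : m ^ 2 ≤ ‖S ξ‖ ^ 2 := by
      have := hmle ξ hξ
      nlinarith
    have h1 : ‖T‖ ^ 2 + ‖lam‖ ^ 2 * m ^ 2 - ε ≤ ‖T ξ + lam • S ξ‖ ^ 2 := by
      rw [hexp]
      nlinarith [sq_nonneg (‖lam‖), mul_le_mul_of_nonneg_left hm2 (sq_nonneg ‖lam‖)]
    calc ‖T‖ ^ 2 + ‖lam‖ ^ 2 * m ^ 2 ≤ ‖T ξ + lam • S ξ‖ ^ 2 + ε := by linarith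
    _ = ‖(T + lam • S) ξ‖ ^ 2 + ε := by rw [happ]
    _ ≤ ‖T + lam • S‖ ^ 2 + ε := by
        nlinarith [norm_nonneg ((T + lam • S) ξ), norm_nonneg (T + lam • S)]
  · intro h lam
    have h1 := h lam
    have h2 : ‖T‖ ^ 2 ≤ ‖T + lam • S‖ ^ 2 := by nlinarith [sq_nonneg (‖lam‖ * m)]
    exact le_of_pow_le_pow_left₀ two_ne_zero (norm_nonneg _) h2
end

section
/- Let H be a nontrivial complex Hilbert space and T, S ∈ B(H) with m(S) > 0, where m(S) = inf{∥Sξ∥ : ξ ∈ H, ∥ξ∥ = 1}. Then there exists a unique γ ∈ ℂ such that ∥(T + γS) + λS∥² ≥ ∥T + γS∥² + |λ|²·m(S)² for every λ ∈ ℂ. -/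
open scoped ComplexInnerProductSpace

private lemma expand_sq' {H : Type*} [NormedAddCommGroup H] [InnerProductSpace ℂ H]
    (x y : H) (t : ℝ) :
    ‖x + (t:ℂ) • y‖^2 = ‖x‖^2 + 2*t*(Complex.re ⟪x, y⟫) + t^2 * ‖y‖^2 := by
  have := norm_add_sq (𝕜 := ℂ) x ((t:ℂ) • y)
  rw [inner_smul_right] at this
  simp [norm_smul] at this
  rw [show ((t:ℂ) • y) = t • y from (RCLike.real_smul_eq_coe_smul (K:=ℂ) t y).symm, this]
  ring_nf; rw [sq_abs]

private lemma combo_sq' {H : Type*} [NormedAddCommGroup H] [InnerProductSpace ℂ H]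
    (x y : H) (t : ℝ) :
    ‖x + (t:ℂ) • y‖^2 = (1-t)*‖x‖^2 + t*‖x + y‖^2 - t*(1-t)*‖y‖^2 := by
  have h1 := expand_sq' x y t
  have h2 := expand_sq' x y 1
  simp only [Complex.ofReal_one, one_smul] at h2
  rw [h1, h2]; ring

set_option maxHeartbeats 1000000 in
private lemma key_lemma {H : Type*} [NormedAddCommGroup H] [InnerProductSpace ℂ H]
    (A S : H →L[ℂ] H) (m : ℝ) (hm' : 0 < m)
    (hS : ∀ ξ : H, m * ‖ξ‖ ≤ ‖S ξ‖)
    (ξ₀ : H) (hξ₀ : ‖ξ₀‖ = 1)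
    (hmin : ∀ μ : ℂ, ‖A‖ ≤ ‖A + μ • S‖) (lam : ℂ) :
    ‖A‖^2 + ‖lam‖^2 * m^2 ≤ ‖A + lam • S‖^2 := by
  rcases eq_or_ne lam 0 with rfl | hlam
  · simp
  have hlam' : 0 < ‖lam‖ := norm_pos_iff.mpr hlam
  obtain ⟨c, hc⟩ : ∃ x : ℝ, x = ‖lam‖^2 * m^2 := ⟨_, rfl⟩
  have hcpos : 0 < c := by rw [hc]; positivity
  rw [← hc]
  apply le_of_forall_pos_le_add
  intro ε hε
  obtain ⟨t, ht0, ht1, htc⟩ : ∃ t : ℝ, 0 < t ∧ t < 1 ∧ t * c ≤ ε := by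
    refine ⟨min (1/2) (ε/c), lt_min (by norm_num) (div_pos hε hcpos),
      lt_of_le_of_lt (min_le_left _ _) (by norm_num), ?_⟩
    calc min (1/2) (ε/c) * c ≤ (ε/c) * c :=
          mul_le_mul_of_nonneg_right (min_le_right _ _) hcpos.le
      _ = ε := by field_simp
  obtain ⟨B, hB⟩ : ∃ B : H →L[ℂ] H, B = A + ((t:ℂ) * lam) • S := ⟨_, rfl⟩
  obtain ⟨C, hCdef⟩ : ∃ x : ℝ,
      x = (1-t)*‖A‖^2 + t*‖A + lam • S‖^2 - t*(1-t)*c := ⟨_, rfl⟩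
  have hpt : ∀ ξ : H, ‖B ξ‖^2 ≤ C * ‖ξ‖^2 := by
    intro ξ
    have hBx : B ξ = A ξ + (t:ℂ) • (lam • S ξ) := by
      rw [hB]
      simp only [ContinuousLinearMap.add_apply, ContinuousLinearMap.smul_apply]
      rw [mul_smul]
    have hcombo : ‖B ξ‖^2 = (1-t)*‖A ξ‖^2 + t*‖A ξ + lam • S ξ‖^2
        - t*(1-t)*‖lam • S ξ‖^2 := by
      rw [hBx, combo_sq']
    have h1 : ‖A ξ‖ ≤ ‖A‖ * ‖ξ‖ := A.le_opNorm ξ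
    have h2 : ‖A ξ + lam • S ξ‖ ≤ ‖A + lam • S‖ * ‖ξ‖ := by
      have := (A + lam • S).le_opNorm ξ
      simpa using this
    have h3 : ‖lam‖ * (m * ‖ξ‖) ≤ ‖lam • S ξ‖ := by
      rw [norm_smul]
      exact mul_le_mul_of_nonneg_left (hS ξ) (norm_nonneg _)
    have e1 : ‖A ξ‖^2 ≤ ‖A‖^2 * ‖ξ‖^2 := by
      rw [← mul_pow]; exact pow_le_pow_left₀ (norm_nonneg _) h1 2
    have e2 : ‖A ξ + lam • S ξ‖^2 ≤ ‖A + lam • S‖^2 * ‖ξ‖^2 := by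
      rw [← mul_pow]; exact pow_le_pow_left₀ (norm_nonneg _) h2 2
    have e3 : c * ‖ξ‖^2 ≤ ‖lam • S ξ‖^2 := by
      have h : (‖lam‖ * (m * ‖ξ‖))^2 ≤ ‖lam • S ξ‖^2 :=
        pow_le_pow_left₀ (by positivity) h3 2
      calc c * ‖ξ‖^2 = (‖lam‖ * (m * ‖ξ‖))^2 := by rw [hc]; ring
        _ ≤ _ := h
    have h4 : (0:ℝ) ≤ t * (1-t) := by nlinarith
    have h5 : (0:ℝ) ≤ 1 - t := by linarith
    rw [hcombo, hCdef]
    have k1 := mul_le_mul_of_nonneg_left e1 h5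
    have k2 := mul_le_mul_of_nonneg_left e2 ht0.le
    have k3 := mul_le_mul_of_nonneg_left e3 h4
    nlinarith
  have hC : 0 ≤ C := by
    have h := hpt ξ₀
    rw [hξ₀] at h
    nlinarith [sq_nonneg ‖B ξ₀‖]
  have hBle : ‖B‖ ≤ Real.sqrt C := by
    apply B.opNorm_le_bound (Real.sqrt_nonneg C)
    intro ξ
    have h := hpt ξ
    have he : ‖B ξ‖ = Real.sqrt (‖B ξ‖^2) := (Real.sqrt_sq (norm_nonneg _)).symm
    rw [he]
    calc Real.sqrt (‖B ξ‖^2) ≤ Real.sqrt (C * ‖ξ‖^2) := Real.sqrt_le_sqrt h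
      _ = Real.sqrt C * ‖ξ‖ := by
          rw [Real.sqrt_mul hC, Real.sqrt_sq (norm_nonneg _)]
  have hB2 : ‖B‖^2 ≤ C := by
    have h := pow_le_pow_left₀ (norm_nonneg B) hBle 2
    rwa [Real.sq_sqrt hC] at h
  have hAB : ‖A‖ ≤ ‖B‖ := hB ▸ hmin _
  have hA2 : ‖A‖^2 ≤ C := le_trans (pow_le_pow_left₀ (norm_nonneg A) hAB 2) hB2
  rw [hCdef] at hA2
  nlinarith

/-- For operators `T, S` on a nontrivial complex Hilbert space with `m(S) > 0`, where
`m(S) = inf {‖Sξ‖ : ‖ξ‖ = 1}`, there exists a unique `γ ∈ ℂ` such that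
`‖(T + γS) + λS‖² ≥ ‖T + γS‖² + |λ|² m(S)²` for every `λ ∈ ℂ`. -/
theorem existsUnique_pythagorean_translate
    {H : Type*} [NormedAddCommGroup H] [InnerProductSpace ℂ H] [CompleteSpace H] [Nontrivial H]
    (T S : H →L[ℂ] H) (m : ℝ) (hm : m = ⨅ ξ : {ξ : H // ‖ξ‖ = 1}, ‖S ξ.1‖) (hm' : 0 < m) :
    ∃! γ : ℂ, ∀ lam : ℂ,
      ‖T + γ • S‖ ^ 2 + ‖lam‖ ^ 2 * m ^ 2 ≤ ‖(T + γ • S) + lam • S‖ ^ 2 := by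
  obtain ⟨ξ₀, hξ₀⟩ : ∃ x : H, ‖x‖ = 1 := exists_norm_eq H zero_le_one
  -- lower bound on ‖S ξ‖
  have hS : ∀ ξ : H, m * ‖ξ‖ ≤ ‖S ξ‖ := by
    have hunit : ∀ ξ : H, ‖ξ‖ = 1 → m ≤ ‖S ξ‖ := by
      intro ξ hξ
      rw [hm]
      exact ciInf_le ⟨0, by rintro x ⟨ξ', rfl⟩; exact norm_nonneg _⟩ (⟨ξ, hξ⟩ : {ξ : H // ‖ξ‖ = 1})
    intro ξ
    rcases eq_or_ne ξ 0 with rfl | hξ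
    · simp
    · have hn : (0:ℝ) < ‖ξ‖ := norm_pos_iff.mpr hξ
      have hu : ‖(((‖ξ‖)⁻¹ : ℝ) : ℂ) • ξ‖ = 1 := by
        rw [norm_smul]; simp [abs_of_pos hn, inv_mul_cancel₀ hn.ne']
      have := hunit _ hu
      rw [map_smul, norm_smul] at this
      simp only [Complex.norm_real, norm_inv, Real.norm_eq_abs, abs_of_pos hn] at this
      calc m * ‖ξ‖ ≤ (‖ξ‖⁻¹ * ‖S ξ‖) * ‖ξ‖ := mul_le_mul_of_nonneg_right this hn.le
        _ = ‖S ξ‖ := by field_simp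
  -- coercivity lower bound
  have hlow : ∀ γ : ℂ, ‖γ‖ * m - ‖T‖ ≤ ‖T + γ • S‖ := by
    intro γ
    have h1 : ‖γ • S ξ₀‖ ≤ ‖(T + γ • S) ξ₀‖ + ‖T ξ₀‖ := by
      have : γ • S ξ₀ = (T + γ • S) ξ₀ - T ξ₀ := by simp
      rw [this]; exact norm_sub_le _ _
    have h2 : ‖γ‖ * m ≤ ‖γ • S ξ₀‖ := by
      rw [norm_smul]
      have := hS ξ₀
      rw [hξ₀, mul_one] at this
      exact mul_le_mul_of_nonneg_left this (norm_nonneg _)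
    have h3 : ‖(T + γ • S) ξ₀‖ ≤ ‖T + γ • S‖ := by
      have := (T + γ • S).le_opNorm ξ₀
      rwa [hξ₀, mul_one] at this
    have h4 : ‖T ξ₀‖ ≤ ‖T‖ := by
      have := T.le_opNorm ξ₀
      rwa [hξ₀, mul_one] at this
    linarith
  -- existence of a minimizer
  have hcont : Continuous fun γ : ℂ => ‖T + γ • S‖ := by fun_prop
  have hR : (0:ℝ) ≤ (2 * ‖T‖ + 1) / m := by positivity
  obtain ⟨γ₀, hγ₀K, hγ₀min⟩ :=
    (isCompact_closedBall (0:ℂ) ((2 * ‖T‖ + 1) / m)).exists_isMinOn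
      ⟨0, Metric.mem_closedBall_self hR⟩ hcont.continuousOn
  have hminglobal : ∀ μ : ℂ, ‖T + γ₀ • S‖ ≤ ‖T + μ • S‖ := by
    intro μ
    by_cases hμ : μ ∈ Metric.closedBall (0:ℂ) ((2 * ‖T‖ + 1) / m)
    · exact hγ₀min hμ
    · have hμ' : (2 * ‖T‖ + 1) / m < ‖μ‖ := by
        simpa [Metric.mem_closedBall, dist_zero_right] using hμ
      have h0 : ‖T + γ₀ • S‖ ≤ ‖T‖ := by
        have := hγ₀min (Metric.mem_closedBall_self hR)
        simpa using this
      have : ‖T‖ + 1 ≤ ‖μ‖ * m - ‖T‖ := by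
        have : ((2 * ‖T‖ + 1) / m) * m ≤ ‖μ‖ * m :=
          mul_le_mul_of_nonneg_right hμ'.le hm'.le
        rw [div_mul_cancel₀ _ hm'.ne'] at this
        linarith
      have := hlow μ
      linarith
  -- main conlusion
  refine ⟨γ₀, ?_, ?_⟩
  · intro lam
    have hmin' : ∀ μ : ℂ, ‖T + γ₀ • S‖ ≤ ‖(T + γ₀ • S) + μ • S‖ := by
      intro μ
      have h := hminglobal (γ₀ + μ)
      have he : T + (γ₀ + μ) • S = (T + γ₀ • S) + μ • S := by
        rw [add_smul]; abel
      rwa [he] at h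
    exact key_lemma (T + γ₀ • S) S m hm' hS ξ₀ hξ₀ hmin' lam
  · intro γ' hγ'
    have hP₀ : ∀ lam : ℂ, ‖T + γ₀ • S‖ ^ 2 + ‖lam‖ ^ 2 * m ^ 2
        ≤ ‖(T + γ₀ • S) + lam • S‖ ^ 2 := by
      intro lam
      have hmin' : ∀ μ : ℂ, ‖T + γ₀ • S‖ ≤ ‖(T + γ₀ • S) + μ • S‖ := by
        intro μ
        have h := hminglobal (γ₀ + μ)
        have he : T + (γ₀ + μ) • S = (T + γ₀ • S) + μ • S := by
          rw [add_smul]; abel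
        rwa [he] at h
      exact key_lemma (T + γ₀ • S) S m hm' hS ξ₀ hξ₀ hmin' lam
    have h1 := hγ' (γ₀ - γ')
    have h2 := hP₀ (γ' - γ₀)
    have e1 : (T + γ' • S) + (γ₀ - γ') • S = T + γ₀ • S := by
      rw [sub_smul]; abel
    have e2 : (T + γ₀ • S) + (γ' - γ₀) • S = T + γ' • S := by
      rw [sub_smul]; abel
    rw [e1] at h1
    rw [e2] at h2
    have hnn : ‖γ' - γ₀‖ = ‖γ₀ - γ'‖ := by rw [← neg_sub, norm_neg]
    rw [hnn] at h2
    have : ‖γ₀ - γ'‖ ^ 2 * m ^ 2 ≤ 0 := by linarith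
    have hz : ‖γ₀ - γ'‖ = 0 := by
      by_contra hne
      have h := mul_pos (pow_pos (lt_of_le_of_ne (norm_nonneg (γ₀ - γ')) (Ne.symm hne)) 2)
        (pow_pos hm' 2)
      linarith
    have : γ₀ - γ' = 0 := norm_eq_zero.mp hz
    linear_combination -this
end

section
/- Let H be an infinite-dimensional complex Hilbert space and T ∈ B(H). Suppose H₀ is a finite-dimensional nonzero subspace of H such that the norm-attaining set M_T = {ξ ∈ H : ∥ξ∥ = 1, ∥Tξ∥ = ∥T∥} equals the unit sphere of H₀, and sup{∥Tξ∥ : ξ ∈ H₀⊥, ∥ξ∥ = 1} < ∥T∥. Then for every S ∈ B(H) the following are equivalent: (i) T is strongly Birkhoff–James orthogonal to S (i.e. ∥T + S∘A∥ ≥ ∥T∥ for every A ∈ B(H)); (ii) there exists a unit vector ξ ∈ H₀ with ∥Tξ∥ = ∥T∥ and S*Tξ = 0; (iii) there exists a unit vector ξ ∈ H₀ with |T|ξ = ∥T∥ξ and S*Tξ = 0. -/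
open ContinuousLinearMap

local notation "⟪" x ", " y "⟫" => @inner ℂ _ _ x y

section Aux

variable {H : Type*} [NormedAddCommGroup H] [InnerProductSpace ℂ H] [CompleteSpace H]

lemma aux_norm_c (r : ℝ) (hr : 0 ≤ r) : ‖((r : ℂ))⁻¹‖ = r⁻¹ := by
  rw [norm_inv, Complex.norm_real, Real.norm_eq_abs, abs_of_nonneg hr]

lemma aux_unit (u : H) (hu : ‖u‖ ≠ 0) : ‖(‖u‖⁻¹ : ℂ) • u‖ = 1 := by
  rw [norm_smul, aux_norm_c _ (norm_nonneg u), inv_mul_cancel₀ hu]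

lemma aux_re_mul (r : ℝ) (z : ℂ) : RCLike.re ((r : ℂ) * z) = r * RCLike.re z := by
  simp [Complex.mul_re]

/-- If a unit vector attains the norm of `T` then it is an eigenvector of `T*T`. -/
lemma aux_eig (T : H →L[ℂ] H) {ξ : H} (h1 : ‖ξ‖ = 1) (h2 : ‖T ξ‖ = ‖T‖) :
    ContinuousLinearMap.adjoint T (T ξ) = ((‖T‖ : ℂ)^2) • ξ := by
  have h3 : ‖ContinuousLinearMap.adjoint T (T ξ)‖ ≤ ‖T‖^2 := by
    calc ‖ContinuousLinearMap.adjoint T (T ξ)‖ ≤ ‖ContinuousLinearMap.adjoint T‖ * ‖T ξ‖ :=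
          le_opNorm _ _
      _ = ‖T‖^2 := by rw [← star_eq_adjoint, norm_star, h2]; ring
  have h4 : RCLike.re ⟪ContinuousLinearMap.adjoint T (T ξ), ((‖T‖:ℂ)^2) • ξ⟫
      = ‖T‖^2 * ‖T‖^2 := by
    rw [inner_smul_right, adjoint_inner_left, inner_self_eq_norm_sq_to_K, h2]
    norm_num [← Complex.ofReal_pow, ← Complex.ofReal_mul]
  have h5 : ‖((‖T‖:ℂ)^2) • ξ‖ = ‖T‖^2 := by
    rw [norm_smul, h1, mul_one, norm_pow, Complex.norm_real, Real.norm_eq_abs,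
      abs_of_nonneg (norm_nonneg T)]
  have hns : ‖ContinuousLinearMap.adjoint T (T ξ) - ((‖T‖:ℂ)^2) • ξ‖^2 ≤ 0 := by
    rw [@norm_sub_sq ℂ, h4, h5]
    nlinarith [norm_nonneg (ContinuousLinearMap.adjoint T (T ξ))]
  have h6 : ‖ContinuousLinearMap.adjoint T (T ξ) - ((‖T‖:ℂ)^2) • ξ‖ = 0 := by
    nlinarith [norm_nonneg (ContinuousLinearMap.adjoint T (T ξ) - ((‖T‖:ℂ)^2) • ξ)]
  exact sub_eq_zero.mp (norm_eq_zero.mp h6)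

/-- Eigenvectors of `T*T` for `‖T‖²` are eigenvectors of `|T|` for `‖T‖`. -/
lemma aux_sqrt_eig (T : H →L[ℂ] H) (hT : 0 < ‖T‖) {ξ : H}
    (h : ContinuousLinearMap.adjoint T (T ξ) = ((‖T‖ : ℂ)^2) • ξ) :
    CFC.sqrt (star T * T) ξ = ‖T‖ • ξ := by
  set b := CFC.sqrt (star T * T) with hb
  have hb2 : b * b = star T * T := CFC.sqrt_mul_sqrt_self _ (star_mul_self_nonneg T)
  have hbpos : b.IsPositive := (nonneg_iff_isPositive b).mp (CFC.sqrt_nonneg _)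
  have hbb : b (b ξ) = ((‖T‖:ℂ)^2) • ξ := by
    rw [← ContinuousLinearMap.mul_apply, hb2, ContinuousLinearMap.mul_apply,
      star_eq_adjoint, h]
  set w := b ξ - (‖T‖:ℂ) • ξ with hw
  have hbw : b w = (-(‖T‖:ℂ)) • w := by
    rw [hw, map_sub, map_smul, hbb]
    module
  have hnn : 0 ≤ RCLike.re ⟪b w, w⟫ := (RCLike.nonneg_iff.mp (hbpos.inner_nonneg_left w)).1
  have hre : RCLike.re ⟪b w, w⟫ = -(‖T‖ * ‖w‖^2) := by
    rw [hbw, inner_smul_left, inner_self_eq_norm_sq_to_K]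
    simp [← Complex.ofReal_pow, ← Complex.ofReal_mul, ← Complex.ofReal_neg]
  have hsq : ‖w‖^2 ≤ 0 := by nlinarith [hnn, hre, hT]
  have hw0 : ‖w‖ = 0 := by nlinarith [norm_nonneg w, hsq]
  have hw1 : b ξ = (‖T‖:ℂ) • ξ := by
    have := norm_eq_zero.mp hw0
    rwa [hw, sub_eq_zero] at this
  rw [hw1]
  norm_cast

/-- Converse: eigenvectors of `|T|` for `‖T‖` attain the norm. -/
lemma aux_sqrt_eig_rev (T : H →L[ℂ] H) {ξ : H} (h1 : ‖ξ‖ = 1)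
    (h : CFC.sqrt (star T * T) ξ = ‖T‖ • ξ) : ‖T ξ‖ = ‖T‖ := by
  set b := CFC.sqrt (star T * T) with hb
  have hb2 : b * b = star T * T := CFC.sqrt_mul_sqrt_self _ (star_mul_self_nonneg T)
  have h' : b ξ = (‖T‖:ℂ) • ξ := by
    rw [h]
    norm_cast
  have hTT : ContinuousLinearMap.adjoint T (T ξ) = ((‖T‖:ℂ)^2) • ξ := by
    rw [← star_eq_adjoint, ← ContinuousLinearMap.mul_apply, ← hb2,
      ContinuousLinearMap.mul_apply, h', map_smul, h', smul_smul, ← pow_two]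
  have h5 : RCLike.re ⟪ContinuousLinearMap.adjoint T (T ξ), ξ⟫ = ‖T ξ‖^2 := by
    rw [adjoint_inner_left]
    exact inner_self_eq_norm_sq _
  rw [hTT, inner_smul_left, inner_self_eq_norm_sq_to_K, h1] at h5
  simp only [map_pow, Complex.conj_ofReal, Complex.ofReal_one, one_pow, mul_one] at h5
  have h6 : ‖T ξ‖^2 = ‖T‖^2 := by
    rw [← h5]
    simp [← Complex.ofReal_pow]
  nlinarith [norm_nonneg (T ξ), norm_nonneg T]

/-- The easy direction: a norm-attaining unit vector with `S* T ξ = 0` witnesses strong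
Birkhoff-James orthogonality. -/
lemma aux_lower (T S : H →L[ℂ] H) {ξ : H} (h1 : ‖ξ‖ = 1) (h2 : ‖T ξ‖ = ‖T‖)
    (h3 : ContinuousLinearMap.adjoint S (T ξ) = 0) (A : H →L[ℂ] H) :
    ‖T‖ ≤ ‖T + S ∘L A‖ := by
  rcases eq_or_lt_of_le (norm_nonneg T) with hT | hT
  · rw [← hT]; exact norm_nonneg _
  have hip : RCLike.re ⟪T ξ, (T + S ∘L A) ξ⟫ = ‖T‖^2 := by
    rw [add_apply, comp_apply, inner_add_right]
    have h4 : ⟪T ξ, S (A ξ)⟫ = 0 := by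
      rw [← adjoint_inner_left, h3, inner_zero_left]
    rw [h4, add_zero, ← h2]
    exact inner_self_eq_norm_sq _
  have h5 : RCLike.re ⟪T ξ, (T + S ∘L A) ξ⟫ ≤ ‖T‖ * ‖(T + S ∘L A) ξ‖ := by
    calc RCLike.re ⟪T ξ, (T + S ∘L A) ξ⟫ ≤ ‖⟪T ξ, (T + S ∘L A) ξ⟫‖ := RCLike.re_le_norm _
      _ ≤ ‖T ξ‖ * ‖(T + S ∘L A) ξ‖ := norm_inner_le_norm _ _
      _ = ‖T‖ * ‖(T + S ∘L A) ξ‖ := by rw [h2]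
  have h6 : ‖(T + S ∘L A) ξ‖ ≤ ‖T + S ∘L A‖ := by
    calc ‖(T + S ∘L A) ξ‖ ≤ ‖T + S ∘L A‖ * ‖ξ‖ := le_opNorm _ _
      _ = ‖T + S ∘L A‖ := by rw [h1, mul_one]
  nlinarith

/-- Pure real arithmetic for the hard direction. -/
lemma aux_real {a b c d t M N m k : ℝ} (ha : 0 ≤ a) (hb : 0 ≤ b)
    (hc : 0 < c) (hd : 0 < d) (ht : 0 < t) (hM : 0 < M) (hN : 0 < N)
    (h1 : t * M^2 ≤ c^2) (h2 : 4*t*M^2*N^2 ≤ d*c^2)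
    (hm1 : 2*m ≤ t*c^2) (hm2 : 2*m ≤ d) (hk : k^2 = N^2 - d) :
    (N^2 - 2*t*c^2 + t^2*M^2)*a^2 + 2*t*M*N*(a*b) + k^2*b^2 ≤ (N^2 - m)*(a^2+b^2) := by
  have key : 2*(t*M*N)*(a*b) ≤ (t*c^2/2)*a^2 + (d/2)*b^2 := by
    have h7 : (2*(t*M*N)*(a*b)) * (2*c^2*t) ≤ ((t*c^2/2)*a^2 + (d/2)*b^2) * (2*c^2*t) := by
      nlinarith [sq_nonneg (t*c^2*a - 2*t*M*N*b),
        mul_le_mul_of_nonneg_left h2 (mul_nonneg ht.le (sq_nonneg b))]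
    exact le_of_mul_le_mul_right h7 (by positivity)
  nlinarith [key, mul_le_mul_of_nonneg_right h1 (mul_nonneg ht.le (sq_nonneg a)),
    mul_le_mul_of_nonneg_right hm1 (sq_nonneg a),
    mul_le_mul_of_nonneg_right hm2 (sq_nonneg b)]

end Aux

set_option maxHeartbeats 1000000

/-- Let `H` be infinite dimensional, `T ∈ B(H)`, and suppose the norm-attaining set `M_T`
is the unit sphere of a finite-dimensional nonzero subspace `H₀` with
`‖T‖_{H₀ᗮ} < ‖T‖`. Then for every `S ∈ B(H)`: `T ⊥^s_B S` iff there is a unit vector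
`ξ ∈ H₀` with `‖Tξ‖ = ‖T‖` and `S*Tξ = 0`, iff there is a unit vector `ξ ∈ H₀` with
`|T|ξ = ‖T‖ξ` and `S*Tξ = 0`. -/
theorem strong_birkhoff_orthogonal_iff_of_normAttainingSet_sphere
    {H : Type*} [NormedAddCommGroup H] [InnerProductSpace ℂ H] [CompleteSpace H]
    (hinf : ¬ FiniteDimensional ℂ H) (T : H →L[ℂ] H)
    (H₀ : Submodule ℂ H) (hH₀ : H₀ ≠ ⊥) [FiniteDimensional ℂ H₀]
    (hM : {ξ : H | ‖ξ‖ = 1 ∧ ‖T ξ‖ = ‖T‖} = {ξ : H | ξ ∈ H₀ ∧ ‖ξ‖ = 1})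
    (hsup : (⨆ ξ : {ξ : H // ξ ∈ H₀ᗮ ∧ ‖ξ‖ = 1}, ‖T ξ.1‖) < ‖T‖)
    (S : H →L[ℂ] H) :
    ((∀ A : H →L[ℂ] H, ‖T‖ ≤ ‖T + S ∘L A‖) ↔
        ∃ ξ ∈ H₀, ‖ξ‖ = 1 ∧ ‖T ξ‖ = ‖T‖ ∧ ContinuousLinearMap.adjoint S (T ξ) = 0) ∧
    ((∀ A : H →L[ℂ] H, ‖T‖ ≤ ‖T + S ∘L A‖) ↔
        ∃ ξ ∈ H₀, ‖ξ‖ = 1 ∧ CFC.sqrt (star T * T) ξ = ‖T‖ • ξ ∧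
          ContinuousLinearMap.adjoint S (T ξ) = 0) := by
  have hk0 : 0 ≤ ⨆ ξ : {ξ : H // ξ ∈ H₀ᗮ ∧ ‖ξ‖ = 1}, ‖T ξ.1‖ :=
    Real.iSup_nonneg fun ξ => norm_nonneg _
  have hN : 0 < ‖T‖ := lt_of_le_of_lt hk0 hsup
  set k := ⨆ ξ : {ξ : H // ξ ∈ H₀ᗮ ∧ ‖ξ‖ = 1}, ‖T ξ.1‖ with hkdef
  -- unit vectors of H₀ attain the norm
  have hTH₀ : ∀ ξ : H, ξ ∈ H₀ → ‖ξ‖ = 1 → ‖T ξ‖ = ‖T‖ := fun ξ h1 h2 =>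
    ((Set.ext_iff.mp hM ξ).mpr ⟨h1, h2⟩).2
  -- scaled version
  have hTH₀' : ∀ u : H, u ∈ H₀ → ‖T u‖ = ‖T‖ * ‖u‖ := by
    intro u hu
    rcases eq_or_ne u 0 with rfl | hu0
    · simp
    · have hnu : ‖u‖ ≠ 0 := norm_ne_zero_iff.mpr hu0
      have h1 : ‖(‖u‖⁻¹ : ℂ) • u‖ = 1 := aux_unit u hnu
      have h2 := hTH₀ _ (H₀.smul_mem (‖u‖⁻¹ : ℂ) hu) h1
      rw [map_smul, norm_smul] at h2
      have h3 : ‖(‖u‖⁻¹ : ℂ)‖ = ‖u‖⁻¹ := aux_norm_c _ (norm_nonneg u)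
      rw [h3] at h2
      calc ‖T u‖ = ‖u‖ * (‖u‖⁻¹ * ‖T u‖) := by field_simp
        _ = ‖u‖ * ‖T‖ := by rw [h2]
        _ = ‖T‖ * ‖u‖ := mul_comm _ _
  -- eigenvector property on H₀
  have hEig : ∀ u : H, u ∈ H₀ → ContinuousLinearMap.adjoint T (T u) = ((‖T‖:ℂ)^2) • u := by
    intro u hu
    rcases eq_or_ne u 0 with rfl | hu0
    · simp
    · have hnu : ‖u‖ ≠ 0 := norm_ne_zero_iff.mpr hu0
      have h1 : ‖(‖u‖⁻¹ : ℂ) • u‖ = 1 := aux_unit u hnu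
      have h2 := aux_eig T h1 (hTH₀ _ (H₀.smul_mem (‖u‖⁻¹ : ℂ) hu) h1)
      rw [map_smul, map_smul, smul_comm ((‖T‖:ℂ)^2) ((‖u‖⁻¹ : ℂ)) u] at h2
      have hinv : (‖u‖⁻¹ : ℂ) ≠ 0 := by
        push_cast
        simp [Complex.ofReal_ne_zero, inv_ne_zero, hnu]
      exact smul_right_injective H hinv h2
  -- bound on the orthogonal complement
  have hk : ∀ v : H, v ∈ H₀ᗮ → ‖T v‖ ≤ k * ‖v‖ := by
    intro v hv
    rcases eq_or_ne v 0 with rfl | hv0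
    · simp
    · have hnv : ‖v‖ ≠ 0 := norm_ne_zero_iff.mpr hv0
      have h1 : ‖(‖v‖⁻¹ : ℂ) • v‖ = 1 := aux_unit v hnv
      have hbdd : BddAbove (Set.range fun ξ : {ξ : H // ξ ∈ H₀ᗮ ∧ ‖ξ‖ = 1} => ‖T ξ.1‖) := by
        refine ⟨‖T‖, ?_⟩
        rintro x ⟨ξ, rfl⟩
        calc ‖T ξ.1‖ ≤ ‖T‖ * ‖ξ.1‖ := le_opNorm _ _
          _ = ‖T‖ := by rw [ξ.2.2, mul_one]
      have h2 : ‖T ((‖v‖⁻¹ : ℂ) • v)‖ ≤ k :=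
        le_ciSup hbdd ⟨(‖v‖⁻¹ : ℂ) • v, H₀ᗮ.smul_mem _ hv, h1⟩
      rw [map_smul, norm_smul] at h2
      have h3 : ‖(‖v‖⁻¹ : ℂ)‖ = ‖v‖⁻¹ := aux_norm_c _ (norm_nonneg v)
      rw [h3] at h2
      have h4 := mul_le_mul_of_nonneg_left h2 (norm_nonneg v)
      rw [← mul_assoc, mul_inv_cancel₀ hnv, one_mul] at h4
      linarith [h4]
  -- HARD DIRECTION
  have hard : (∀ A : H →L[ℂ] H, ‖T‖ ≤ ‖T + S ∘L A‖) →
      ∃ ξ ∈ H₀, ‖ξ‖ = 1 ∧ ‖T ξ‖ = ‖T‖ ∧ ContinuousLinearMap.adjoint S (T ξ) = 0 := by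
    intro h
    by_contra hcon
    push_neg at hcon
    set R := (ContinuousLinearMap.adjoint S).comp T with hRdef
    have hR : ∀ ξ : H, ξ ∈ H₀ → ‖ξ‖ = 1 → R ξ ≠ 0 := by
      intro ξ h1 h2
      exact hcon ξ h1 h2 (hTH₀ ξ h1 h2)
    -- a uniform lower bound via compactness
    obtain ⟨c, hc0, hc⟩ : ∃ c, 0 < c ∧ ∀ u : H, u ∈ H₀ → c * ‖u‖ ≤ ‖R u‖ := by
      have hcomp : IsCompact (Metric.sphere (0 : H₀) 1) := isCompact_sphere _ _
      have hne : (Metric.sphere (0 : H₀) 1).Nonempty := by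
        obtain ⟨x, hx, hx0⟩ := Submodule.exists_mem_ne_zero_of_ne_bot hH₀
        have hnx : ‖x‖ ≠ 0 := norm_ne_zero_iff.mpr hx0
        refine ⟨(‖x‖⁻¹ : ℂ) • ⟨x, hx⟩, ?_⟩
        simp only [Metric.mem_sphere, dist_zero_right]
        show ‖(‖x‖⁻¹ : ℂ) • x‖ = 1
        exact aux_unit x hnx
      have hcont : ContinuousOn (fun w : H₀ => ‖R w.1‖) (Metric.sphere (0 : H₀) 1) :=
        ((R.continuous.comp continuous_subtype_val).norm).continuousOn
      obtain ⟨ξ₀, hξ₀, hmin⟩ := hcomp.exists_isMinOn hne hcont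
      have hξ₀n : ‖(ξ₀ : H)‖ = 1 := by
        simpa [dist_zero_right] using hξ₀
      refine ⟨‖R ξ₀.1‖, norm_pos_iff.mpr (hR ξ₀.1 ξ₀.2 hξ₀n), ?_⟩
      intro u hu
      rcases eq_or_ne u 0 with rfl | hu0
      · simp
      · have hnu : ‖u‖ ≠ 0 := norm_ne_zero_iff.mpr hu0
        have hw : ((‖u‖⁻¹ : ℂ) • (⟨u, hu⟩ : H₀)) ∈ Metric.sphere (0 : H₀) 1 := by
          simp only [Metric.mem_sphere, dist_zero_right]
          show ‖(‖u‖⁻¹ : ℂ) • u‖ = 1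
          exact aux_unit u hnu
        have h2 := hmin hw
        have h4 : ‖R ξ₀.1‖ ≤ ‖u‖⁻¹ * ‖R u‖ := by
          calc ‖R ξ₀.1‖ ≤ ‖R (((‖u‖⁻¹ : ℂ) • (⟨u, hu⟩ : H₀)) : H)‖ := h2
            _ = ‖u‖⁻¹ * ‖R u‖ := by
                show ‖R ((‖u‖⁻¹ : ℂ) • u)‖ = _
                rw [map_smul, norm_smul, aux_norm_c _ (norm_nonneg u)]
        have h5 := mul_le_mul_of_nonneg_left h4 (norm_nonneg u)
        rw [← mul_assoc, mul_inv_cancel₀ hnu, one_mul] at h5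
        linarith [h5]
    -- constants
    set M := ‖S‖ * ‖R‖ + 1 with hMdef
    have hM0 : 0 < M := by positivity
    have hSR : ∀ u : H, ‖S (R u)‖ ≤ M * ‖u‖ := by
      intro u
      calc ‖S (R u)‖ ≤ ‖S‖ * ‖R u‖ := le_opNorm _ _
        _ ≤ ‖S‖ * (‖R‖ * ‖u‖) := mul_le_mul_of_nonneg_left (le_opNorm _ _) (norm_nonneg S)
        _ ≤ M * ‖u‖ := by nlinarith [norm_nonneg u, norm_nonneg S, norm_nonneg R]
    set d := ‖T‖^2 - k^2 with hddef
    have hd0 : 0 < d := by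
      have : k^2 < ‖T‖^2 := by nlinarith
      rw [hddef]; linarith
    set t := min (c^2/M^2) (d*c^2/(4*M^2*‖T‖^2)) with htdef
    have ht0 : 0 < t := lt_min (by positivity) (by positivity)
    have ht1 : t * M^2 ≤ c^2 := by
      have h9 := min_le_left (c^2/M^2) (d*c^2/(4*M^2*‖T‖^2))
      rw [← htdef] at h9
      rw [← le_div_iff₀ (by positivity : (0:ℝ) < M^2)]
      exact h9
    have ht2 : 4*t*M^2*‖T‖^2 ≤ d*c^2 := by
      have h9 := min_le_right (c^2/M^2) (d*c^2/(4*M^2*‖T‖^2))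
      rw [← htdef] at h9
      have h10 := mul_le_mul_of_nonneg_right h9 (by positivity : (0:ℝ) ≤ 4*M^2*‖T‖^2)
      rw [div_mul_cancel₀] at h10
      · linarith
      · positivity
    set m := min (t*c^2/2) (d/2) with hmdef
    have hm0 : 0 < m := lt_min (by positivity) (by positivity)
    have hm1 : 2*m ≤ t*c^2 := by
      have h9 := min_le_left (t*c^2/2) (d/2); rw [← hmdef] at h9; linarith
    have hm2 : 2*m ≤ d := by
      have h9 := min_le_right (t*c^2/2) (d/2); rw [← hmdef] at h9; linarith
    -- the perturbation
    set P : H →L[ℂ] H := H₀.subtypeL.comp (H₀.orthogonalProjectionOnto) with hPdef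
    set A : H →L[ℂ] H := -((t:ℂ) • (R.comp P)) with hAdef
    -- pointwise bound
    have hpoint : ∀ x : H, ‖(T + S ∘L A) x‖^2 ≤ (‖T‖^2 - m) * ‖x‖^2 := by
      intro x
      set u : H := P x with hudef
      have hu : u ∈ H₀ := (H₀.orthogonalProjectionOnto x).2
      set v : H := x - u with hvdef
      have hv : v ∈ H₀ᗮ := Submodule.sub_starProjection_mem_orthogonal (K := H₀) x
      have huv : ⟪u, v⟫ = 0 := (Submodule.mem_orthogonal H₀ v).mp hv u hu
      have hxuv : x = u + v := by rw [hvdef]; abel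
      have hx2 : ‖x‖^2 = ‖u‖^2 + ‖v‖^2 := by
        rw [hxuv, @norm_add_sq ℂ, huv]
        simp
      set y : H := T u - (t:ℂ) • S (R u) with hydef
      set z : H := T v with hzdef
      have hGx : (T + S ∘L A) x = y + z := by
        have e1 : (T + S ∘L A) x = T x - (t:ℂ) • S (R (P x)) := by
          simp only [hAdef, add_apply, comp_apply, neg_apply, smul_apply, map_neg, map_smul]
          abel
        rw [e1, ← hudef, hxuv, map_add]
        rw [hydef, hzdef]
        abel
      clear_value u v y z
      have hTu : ‖T u‖ = ‖T‖ * ‖u‖ := hTH₀' u hu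
      have hRuTu : RCLike.re ⟪T u, S (R u)⟫ = ‖R u‖^2 := by
        rw [← adjoint_inner_left]
        exact inner_self_eq_norm_sq _
      have htnorm : ‖(t:ℂ)‖ = t := by
        rw [Complex.norm_real, Real.norm_eq_abs, abs_of_pos ht0]
      have hy2 : ‖y‖^2 = ‖T u‖^2 - 2*(t*‖R u‖^2) + (t*‖S (R u)‖)^2 := by
        rw [hydef, @norm_sub_sq ℂ, inner_smul_right, aux_re_mul, hRuTu,
          norm_smul, htnorm]
      have hy2b : ‖y‖^2 ≤ (‖T‖^2 - 2*t*c^2 + t^2*M^2)*‖u‖^2 := by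
        have e2 : c*‖u‖ ≤ ‖R u‖ := hc u hu
        have e3 : ‖S (R u)‖ ≤ M*‖u‖ := hSR u
        have e4 : (c*‖u‖)^2 ≤ ‖R u‖^2 := by
          nlinarith [mul_nonneg hc0.le (norm_nonneg u)]
        have e5 : ‖S (R u)‖^2 ≤ (M*‖u‖)^2 := by
          nlinarith [norm_nonneg (S (R u)), mul_nonneg hM0.le (norm_nonneg u)]
        rw [hy2, hTu]
        nlinarith [mul_le_mul_of_nonneg_left e4 (by positivity : (0:ℝ) ≤ 2*t),
          mul_le_mul_of_nonneg_left e5 (sq_nonneg t)]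
      have hcross0 : ⟪T u, T v⟫ = 0 := by
        calc ⟪T u, T v⟫ = ⟪ContinuousLinearMap.adjoint T (T u), v⟫ :=
              (adjoint_inner_left T v (T u)).symm
          _ = ⟪((‖T‖:ℂ)^2) • u, v⟫ := by rw [hEig u hu]
          _ = 0 := by rw [inner_smul_left, huv, mul_zero]
      have hyz : RCLike.re ⟪y, z⟫ ≤ t*M*‖T‖*(‖u‖*‖v‖) := by
        have w1 : ⟪y, z⟫ = -((t:ℂ)*⟪S (R u), T v⟫) := by
          rw [hydef, hzdef, inner_sub_left, inner_smul_left, hcross0, Complex.conj_ofReal]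
          ring
        have w2 : RCLike.re ⟪y, z⟫ = -(t * RCLike.re ⟪S (R u), T v⟫) := by
          rw [w1, map_neg, aux_re_mul]
        have w3 : ‖⟪S (R u), T v⟫‖ ≤ (M*‖u‖)*(‖T‖*‖v‖) := by
          calc ‖⟪S (R u), T v⟫‖ ≤ ‖S (R u)‖ * ‖T v‖ := norm_inner_le_norm _ _
            _ ≤ (M*‖u‖)*(‖T‖*‖v‖) := by
                apply mul_le_mul (hSR u) (le_opNorm T v) (norm_nonneg _) (by positivity)
        have w4 : -RCLike.re ⟪S (R u), T v⟫ ≤ (M*‖u‖)*(‖T‖*‖v‖) := by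
          have := RCLike.abs_re_le_norm ⟪S (R u), T v⟫
          have := neg_abs_le (RCLike.re ⟪S (R u), T v⟫)
          linarith [RCLike.abs_re_le_norm ⟪S (R u), T v⟫, w3,
            neg_abs_le (RCLike.re ⟪S (R u), T v⟫)]
        rw [w2]
        have := mul_le_mul_of_nonneg_left w4 ht0.le
        nlinarith [this]
      have hz2 : ‖z‖^2 ≤ k^2*‖v‖^2 := by
        have e6 := hk v hv
        have := norm_nonneg (T v)
        have := mul_nonneg hk0 (norm_nonneg v)
        rw [hzdef]
        nlinarith
      have hGx2 : ‖(T + S ∘L A) x‖^2 ≤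
          (‖T‖^2 - 2*t*c^2 + t^2*M^2)*‖u‖^2 + 2*t*M*‖T‖*(‖u‖*‖v‖) + k^2*‖v‖^2 := by
        rw [hGx, @norm_add_sq ℂ]
        linarith [hy2b, hyz, hz2]
      have harith := aux_real (norm_nonneg u) (norm_nonneg v) hc0 hd0 ht0 hM0 hN
        ht1 ht2 hm1 hm2 (show k^2 = ‖T‖^2 - d by rw [hddef]; ring)
      rw [hx2]
      exact le_trans hGx2 harith
    have hmN : m ≤ ‖T‖^2 := by nlinarith
    have hop : ‖T + S ∘L A‖ ≤ Real.sqrt (‖T‖^2 - m) := by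
      apply opNorm_le_bound _ (Real.sqrt_nonneg _)
      intro x
      have h7 := hpoint x
      have h8 : ‖(T + S ∘L A) x‖ ≤ Real.sqrt ((‖T‖^2 - m)*‖x‖^2) := by
        rw [← Real.sqrt_sq (norm_nonneg ((T + S ∘L A) x))]
        exact Real.sqrt_le_sqrt h7
      rwa [Real.sqrt_mul (by linarith : (0:ℝ) ≤ ‖T‖^2 - m), Real.sqrt_sq (norm_nonneg x)] at h8
    have hlt : Real.sqrt (‖T‖^2 - m) < ‖T‖ := by
      have h9 := Real.sqrt_lt_sqrt (by linarith : (0:ℝ) ≤ ‖T‖^2 - m)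
        (by linarith : ‖T‖^2 - m < ‖T‖^2)
      rwa [Real.sqrt_sq hN.le] at h9
    exact absurd (h A) (not_le.mpr (lt_of_le_of_lt hop hlt))
  constructor
  · constructor
    · exact hard
    · rintro ⟨ξ, hξ, h1, h2, h3⟩
      exact fun A => aux_lower T S h1 h2 h3 A
  · constructor
    · intro h
      obtain ⟨ξ, hξ, h1, h2, h3⟩ := hard h
      exact ⟨ξ, hξ, h1, aux_sqrt_eig T hN (aux_eig T h1 h2), h3⟩
    · rintro ⟨ξ, hξ, h1, h2, h3⟩
      exact fun A => aux_lower T S h1 (aux_sqrt_eig_rev T h1 h2) h3 A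
end

section
/- Let H be an infinite-dimensional complex Hilbert space and T ∈ B(H). Suppose H₀ is a finite-dimensional nonzero subspace of H such that the norm-attaining set M_T = {ξ ∈ H : ∥ξ∥ = 1, ∥Tξ∥ = ∥T∥} equals the unit sphere of H₀, and sup{∥Tξ∥ : ξ ∈ H₀⊥, ∥ξ∥ = 1} < ∥T∥. Then there exists a unit vector ξ ∈ H₀ such that |T|ξ = ∥T∥ξ and ∥T∥²·(T*T)ξ = (T*T)²ξ. -/
set_option maxHeartbeats 800000 in
open ContinuousLinearMap RCLike in
/-- Let `H` be infinite dimensional, `T ∈ B(H)`, and suppose the norm-attaining set `M_T`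
is the unit sphere of a finite-dimensional nonzero subspace `H₀` with `‖T‖_{H₀ᗮ} < ‖T‖`.
Then there is a unit vector `ξ ∈ H₀` with `|T|ξ = ‖T‖ξ` and `‖T‖²(T*T)ξ = (T*T)²ξ`. -/
theorem exists_unit_vector_of_normAttainingSet_sphere
    {H : Type*} [NormedAddCommGroup H] [InnerProductSpace ℂ H] [CompleteSpace H]
    (hinf : ¬ FiniteDimensional ℂ H) (T : H →L[ℂ] H)
    (H₀ : Submodule ℂ H) (hH₀ : H₀ ≠ ⊥) [FiniteDimensional ℂ H₀]
    (hM : {ξ : H | ‖ξ‖ = 1 ∧ ‖T ξ‖ = ‖T‖} = {ξ : H | ξ ∈ H₀ ∧ ‖ξ‖ = 1})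
    (hsup : (⨆ ξ : {ξ : H // ξ ∈ H₀ᗮ ∧ ‖ξ‖ = 1}, ‖T ξ.1‖) < ‖T‖) :
    ∃ ξ ∈ H₀, ‖ξ‖ = 1 ∧ CFC.sqrt (star T * T) ξ = ‖T‖ • ξ ∧
      ‖T‖ ^ 2 • (star T * T) ξ = ((star T * T) * (star T * T)) ξ := by
  -- a unit vector in H₀
  obtain ⟨x, hxH₀, hx0⟩ := Submodule.exists_mem_ne_zero_of_ne_bot hH₀
  set ξ : H := ((‖x‖ : ℂ))⁻¹ • x with hξdef
  have hxn : (‖x‖ : ℝ) ≠ 0 := norm_ne_zero_iff.mpr hx0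
  have hξH₀ : ξ ∈ H₀ := H₀.smul_mem _ hxH₀
  have hξ1 : ‖ξ‖ = 1 := by
    simp [hξdef, norm_smul, inv_mul_cancel₀ hxn]
  have hTξ : ‖T ξ‖ = ‖T‖ := ((Set.ext_iff.mp hM ξ).mpr ⟨hξH₀, hξ1⟩).2
  have hT0 : 0 < ‖T‖ := lt_of_le_of_lt (Real.iSup_nonneg fun i => norm_nonneg _) hsup
  set S : H →L[ℂ] H := star T * T with hSdef
  have hS : (0 : H →L[ℂ] H) ≤ S := star_mul_self_nonneg T
  -- inner product value
  have hinner : (inner ℂ (S ξ) ξ : ℂ) = RCLike.ofReal (‖T‖ ^ 2) := by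
    have h : (inner ℂ (S ξ) ξ : ℂ) = (inner ℂ (T ξ) (T ξ) : ℂ) := by
      simp [hSdef, ContinuousLinearMap.mul_apply, star_eq_adjoint, adjoint_inner_left]
    rw [h, inner_self_eq_norm_sq_to_K, hTξ]
    exact (RCLike.ofReal_pow _ _).symm
  -- ξ is an eigenvector of S with eigenvalue ‖T‖²
  have hSnorm : ‖S‖ = ‖T‖ ^ 2 := by
    rw [hSdef, CStarRing.norm_star_mul_self]; ring
  have h1 : S ξ = (‖T‖ ^ 2 : ℝ) • ξ := by
    have hle : ‖S ξ - (‖T‖ ^ 2 : ℝ) • ξ‖ ^ 2 ≤ 0 := by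
      rw [@norm_sub_sq ℂ]
      have hre : (inner ℂ (S ξ) ((‖T‖ ^ 2 : ℝ) • ξ) : ℂ) = RCLike.ofReal (‖T‖ ^ 2 * ‖T‖ ^ 2) := by
        rw [real_smul_eq_coe_smul (K := ℂ), inner_smul_right, hinner, ← RCLike.ofReal_mul]
      have hn1 : ‖S ξ‖ ≤ ‖T‖ ^ 2 := by
        calc ‖S ξ‖ ≤ ‖S‖ * ‖ξ‖ := S.le_opNorm ξ
        _ = ‖T‖ ^ 2 := by rw [hξ1, hSnorm, mul_one]
      have hn1' : ‖S ξ‖ ^ 2 ≤ (‖T‖ ^ 2) ^ 2 :=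
        pow_le_pow_left₀ (norm_nonneg _) hn1 2
      have hn2 : ‖(‖T‖ ^ 2 : ℝ) • ξ‖ ^ 2 = (‖T‖ ^ 2) ^ 2 := by
        rw [norm_smul, hξ1]; simp [abs_of_nonneg (sq_nonneg ‖T‖)]
      rw [hre, hn2, RCLike.ofReal_re]; nlinarith
    have h0 : ‖S ξ - (‖T‖ ^ 2 : ℝ) • ξ‖ ^ 2 = 0 := le_antisymm hle (sq_nonneg _)
    have h0' := pow_eq_zero_iff (n := 2) (by norm_num) |>.mp h0
    rw [norm_eq_zero] at h0'
    exact sub_eq_zero.mp h0'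
  -- the square root
  set A : H →L[ℂ] H := CFC.sqrt S with hAdef
  have hA2 : A * A = S := by
    have := CFC.sq_sqrt S hS
    rwa [pow_two] at this
  have hApos : A.IsPositive := (ContinuousLinearMap.nonneg_iff_isPositive A).mp (CFC.sqrt_nonneg S)
  set η : H := A ξ - ‖T‖ • ξ with hηdef
  have hη : A η + ‖T‖ • η = 0 := by
    have hAA : A η = (‖T‖ ^ 2 : ℝ) • ξ - ‖T‖ • A ξ := by
      rw [hηdef, map_sub, ← ContinuousLinearMap.mul_apply, hA2, h1, A.map_smul_of_tower]
    rw [hAA, hηdef, smul_sub, smul_smul]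
    module
  have hη0 : η = 0 := by
    have hre0 : re (inner ℂ (A η + ‖T‖ • η) η : ℂ) = 0 := by rw [hη]; simp
    rw [inner_add_left, map_add] at hre0
    have h2 : re (inner ℂ ((‖T‖ : ℝ) • η) η : ℂ) = ‖T‖ * ‖η‖ ^ 2 := by
      rw [real_smul_eq_coe_smul (K := ℂ), inner_smul_left, inner_self_eq_norm_sq_to_K,
        RCLike.conj_ofReal, ← RCLike.ofReal_pow, ← RCLike.ofReal_mul, RCLike.ofReal_re]
    have h3 : 0 ≤ re (inner ℂ (A η) η : ℂ) := (RCLike.nonneg_iff.mp (hApos.inner_nonneg_left η)).1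
    rw [h2] at hre0
    have h4 : ‖η‖ ^ 2 = 0 := by nlinarith [sq_nonneg ‖η‖]
    have h5 : ‖η‖ = 0 := by
      have := pow_eq_zero_iff (n := 2) (by norm_num) |>.mp h4
      exact this
    exact norm_eq_zero.mp h5
  have hAξ : A ξ = ‖T‖ • ξ := sub_eq_zero.mp hη0
  refine ⟨ξ, hξH₀, hξ1, hAξ, ?_⟩
  have hmul : (S * S) ξ = S (S ξ) := rfl
  rw [hmul, h1, S.map_smul_of_tower, h1, smul_smul]
end

section
/- Let A be a C*-algebra, let V be an inner product C*-module over A, let ε ∈ [0, 1/2), and let x, y ∈ V. Then: (a) if x is ε-orthogonal to y (∥⟨x, y⟩∥ ≤ ε∥x∥∥y∥), then x is approximately strongly Birkhoff–James orthogonal to y (x ⊥^s_{B^ε} y); and (b) if x ⊥^s_{B^ε} y, then x is approximately Birkhoff–James orthogonal to y, i.e. ∥x + λy∥² ≥ ∥x∥² − 2ε·|λ|·∥x∥·∥y∥ for all λ ∈ ℂ. -/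
open scoped RightActions

/-- The December 2024 Mathlib `CStarModule` (right Hilbert C*-module: `A` acts on the right
through `SMul Aᵐᵒᵖ E`), restated since Mathlib's `CStarModule` is now a left-module notion. -/
class CStarModuleRight (A : outParam <| Type*) (E : Type*) [NonUnitalSemiring A] [StarRing A]
    [Module ℂ A] [AddCommGroup E] [Module ℂ E] [PartialOrder A] [SMul Aᵐᵒᵖ E] [Norm A] [Norm E]
    extends Inner A E where
  inner_add_right {x} {y} {z} : inner x (y + z) = inner x y + inner x z
  inner_self_nonneg {x} : 0 ≤ inner x x
  inner_self {x} : inner x x = 0 ↔ x = 0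
  inner_op_smul_right {a : A} {x y : E} : inner x (y <• a) = inner x y * a
  inner_smul_right_complex {z : ℂ} {x} {y} : inner x (z • y) = z • inner x y
  star_inner x y : star (inner x y) = inner y x
  norm_eq_sqrt_norm_inner_self x : ‖x‖ = √‖inner x x‖

section Aux

namespace CStarModuleRight

variable {A : Type*} [NonUnitalCStarAlgebra A] [PartialOrder A]
  {E : Type*} [NormedAddCommGroup E] [NormedSpace ℂ E] [SMul Aᵐᵒᵖ E] [CStarModuleRight A E]

lemma inner_neg_right' {x y : E} : inner A x (-y) = -inner A x y := by
  rw [← neg_one_smul ℂ y, inner_smul_right_complex, neg_one_smul]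

lemma inner_sub_right {x y z : E} : inner A x (y - z) = inner A x y - inner A x z := by
  rw [sub_eq_add_neg, inner_add_right, inner_neg_right', ← sub_eq_add_neg]

lemma inner_sub_left {x y z : E} : inner A (x - y) z = inner A x z - inner A y z := by
  rw [← star_inner z, inner_sub_right, star_sub, star_inner, star_inner]

lemma inner_op_smul_left {a : A} {x y : E} : inner A (x <• a) y = star a * inner A x y := by
  rw [← star_inner y, inner_op_smul_right, star_mul, star_inner]

lemma inner_smul_left_complex {z : ℂ} {x y : E} :
    inner A (z • x) y = star z • inner A x y := by
  rw [← star_inner y, inner_smul_right_complex, star_smul, star_inner]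

lemma isSelfAdjoint_inner_self {x : E} : IsSelfAdjoint (inner A x x) := star_inner _ _

lemma norm_sq_eq {x : E} : ‖x‖ ^ 2 = ‖inner A x x‖ := by
  rw [norm_eq_sqrt_norm_inner_self (A := A) x, Real.sq_sqrt (norm_nonneg _)]

variable [StarOrderedRing A]

lemma inner_mul_inner_swap_le {x y : E} :
    inner A y x * inner A x y ≤ ‖x‖ ^ 2 • inner A y y := by
  rcases eq_or_ne x 0 with h | h
  · subst h
    have h1 : inner A y (0 : E) = 0 := by
      simpa using (inner_sub_right (A := A) (x := y) (y := (0 : E)) (z := 0))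
    simp [h1]
  · set c : ℝ := ‖x‖ ^ 2 with hc
    have hcpos : 0 < c := by positivity
    set a : A := inner A x y with ha
    have hexp : inner A (x <• a - (c : ℂ) • y) (x <• a - (c : ℂ) • y)
        = star a * inner A x x * a - (c : ℂ) • (star a * inner A x y)
          - (c : ℂ) • (inner A y x * a) + (c : ℂ) • ((c : ℂ) • inner A y y) := by
      simp only [inner_sub_left, inner_sub_right, inner_op_smul_left, inner_op_smul_right,
        inner_smul_left_complex, inner_smul_right_complex, Complex.star_def, Complex.conj_ofReal,
        mul_smul_comm, smul_mul_assoc, smul_sub, add_mul, mul_add, sub_mul, mul_sub]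
      abel
    have hb : star a * inner A x x * a ≤ (c : ℂ) • (star a * a) := by
      have := CStarAlgebra.star_left_conjugate_le_norm_smul (a := a) (b := inner A x x)
        isSelfAdjoint_inner_self
      rw [← norm_sq_eq, ← hc] at this
      simpa using this
    have h0 : (0 : A) ≤ (c : ℂ) • (star a * a) - (c : ℂ) • (star a * inner A x y)
          - (c : ℂ) • (inner A y x * a) + (c : ℂ) • ((c : ℂ) • inner A y y) := by
      calc (0 : A) ≤ inner A (x <• a - (c : ℂ) • y) (x <• a - (c : ℂ) • y) := inner_self_nonneg
        _ = _ := hexp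
        _ ≤ _ := by gcongr
    have hsa : star a = inner A y x := star_inner _ _
    rw [hsa, ← ha, sub_self, zero_sub, le_neg_add_iff_add_le, add_zero] at h0
    have key : c • (inner A y x * a) ≤ c • (c • inner A y y) := by
      simpa using h0
    rw [smul_le_smul_iff_of_pos_left hcpos] at key
    exact key

variable (E) in
lemma norm_inner_le {x y : E} : ‖inner A x y‖ ≤ ‖x‖ * ‖y‖ := by
  have := calc ‖inner A x y‖ ^ 2 = ‖inner A y x * inner A x y‖ := by
                rw [← star_inner x, CStarRing.norm_star_mul_self, pow_two]
    _ ≤ ‖‖x‖ ^ 2 • inner A y y‖ := by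
                refine CStarAlgebra.norm_le_norm_of_nonneg_of_le ?_ inner_mul_inner_swap_le
                rw [← star_inner x]
                exact star_mul_self_nonneg (inner A x y)
    _ = ‖x‖ ^ 2 * ‖inner A y y‖ := by simp [norm_smul]
    _ = ‖x‖ ^ 2 * ‖y‖ ^ 2 := by rw [norm_sq_eq (A := A) (x := y)]
    _ = (‖x‖ * ‖y‖) ^ 2 := by simp only [mul_pow]
  refine (pow_le_pow_iff_left₀ (norm_nonneg _) ?_ (by simp)).mp this
  positivity

end CStarModuleRight

variable {A : Type*} [NonUnitalCStarAlgebra A] [PartialOrder A] [StarOrderedRing A]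
  {E : Type*} [NormedAddCommGroup E] [NormedSpace ℂ E] [SMul Aᵐᵒᵖ E] [CStarModuleRight A E]

open CStarModuleRight

omit [StarOrderedRing A] in
lemma my_inner_ext {a b : E} (h : ∀ z : E, (inner A z a : A) = inner A z b) : a = b := by
  have h0 : (inner A (a - b) (a - b) : A) = 0 := by
    rw [CStarModuleRight.inner_sub_right, h (a - b), sub_self]
  exact sub_eq_zero.mp (inner_self.mp h0)

omit [StarOrderedRing A] in
lemma my_op_smul_smul (y : E) (lam : ℂ) (e : A) : y <• (lam • e) = lam • (y <• e) := by
  refine my_inner_ext (A := A) fun z => ?_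
  rw [inner_op_smul_right, inner_smul_right_complex, inner_op_smul_right, mul_smul_comm]

end Aux

/-- For `ε ∈ [0, 1/2)` and elements `x, y` of an inner product C*-module `E` over a
C*-algebra `A`: (a) `x ⊥^ε y` implies `x ⊥^s_{B^ε} y`, and (b) `x ⊥^s_{B^ε} y` implies
`x ⊥^ε_B y`. -/
theorem approx_orthogonal_imp_approx_strong_birkhoff_imp_approx_birkhoff
    {A : Type*} [NonUnitalCStarAlgebra A] [PartialOrder A] [StarOrderedRing A]
    {E : Type*} [NormedAddCommGroup E] [NormedSpace ℂ E] [SMul Aᵐᵒᵖ E] [CStarModuleRight A E]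
    (ε : ℝ) (hε : 0 ≤ ε) (hε' : ε < 1 / 2) (x y : E) :
    ((‖(inner A x y : A)‖ ≤ ε * ‖x‖ * ‖y‖) →
      ∀ a : A, ‖x‖ ^ 2 - 2 * ε * ‖a‖ * ‖x‖ * ‖y‖ ≤ ‖x + y <• a‖ ^ 2) ∧
    ((∀ a : A, ‖x‖ ^ 2 - 2 * ε * ‖a‖ * ‖x‖ * ‖y‖ ≤ ‖x + y <• a‖ ^ 2) →
      ∀ lam : ℂ, ‖x‖ ^ 2 - 2 * ε * ‖lam‖ * ‖x‖ * ‖y‖ ≤ ‖x + lam • y‖ ^ 2) := by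
  open CStarModuleRight Filter Topology in
  constructor
  · -- part (a)
    intro hxy a
    have h1 : ‖x‖ ^ 2 ≤ ‖x‖ * ‖x + y <• a‖ + ε * ‖x‖ * ‖y‖ * ‖a‖ := by
      calc ‖x‖ ^ 2 = ‖(inner A x x : A)‖ := norm_sq_eq
        _ = ‖(inner A x (x + y <• a) : A) - (inner A x y : A) * a‖ := by
            rw [CStarModuleRight.inner_add_right, inner_op_smul_right, add_sub_cancel_right]
        _ ≤ ‖(inner A x (x + y <• a) : A)‖ + ‖(inner A x y : A) * a‖ := norm_sub_le _ _
        _ ≤ ‖x‖ * ‖x + y <• a‖ + ‖(inner A x y : A)‖ * ‖a‖ := by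
            gcongr
            · exact norm_inner_le E
            · exact norm_mul_le _ _
        _ ≤ ‖x‖ * ‖x + y <• a‖ + ε * ‖x‖ * ‖y‖ * ‖a‖ := by
            have := mul_le_mul_of_nonneg_right hxy (norm_nonneg a)
            gcongr
    set t := ‖x‖ with ht
    set N := ‖x + y <• a‖ with hN
    set c := ε * ‖a‖ * ‖y‖ with hc
    have hc0 : 0 ≤ c := by positivity
    have ht0 : 0 ≤ t := norm_nonneg x
    have hN0 : 0 ≤ N := norm_nonneg _
    have h1' : t ^ 2 ≤ t * N + c * t := by rw [hc]; nlinarith [h1]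
    by_cases hcase : t ≤ 2 * c
    · nlinarith [sq_nonneg N, mul_le_mul_of_nonneg_left hcase ht0]
    · push_neg at hcase
      have htpos : 0 < t := lt_of_le_of_lt (by positivity) hcase
      have hNt : t - c ≤ N := by
        have : t * (t - c) ≤ t * N := by nlinarith [h1']
        exact le_of_mul_le_mul_left this htpos
      have htc : 0 ≤ t - c := by nlinarith
      nlinarith [mul_nonneg (sub_nonneg.mpr hNt) (add_nonneg hN0 htc)]
  · -- part (b)
    intro h lam
    set l := CStarAlgebra.approximateUnit A with hl'
    have hl := CStarAlgebra.increasingApproximateUnit (A := A)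
    haveI : l.NeBot := hl.toIsApproximateUnit.neBot
    set h0 : A := inner A y y with hh0
    have key : ∀ e : A, 0 ≤ e → ‖e‖ ≤ 1 →
        ‖y <• e - y‖ ^ 2 ≤ 2 * ‖h0 * e - h0‖ := by
      intro e he he1
      have hip : (inner A (y <• e - y) y : A) = e * h0 - h0 := by
        rw [CStarModuleRight.inner_sub_left, inner_op_smul_left, he.isSelfAdjoint.star_eq, hh0]
      have hipn : ‖(inner A (y <• e - y) y : A)‖ = ‖h0 * e - h0‖ := by
        rw [← norm_star, hip, star_sub, star_mul, he.isSelfAdjoint.star_eq,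
          (CStarModuleRight.isSelfAdjoint_inner_self (x := y)).star_eq, hh0]
      calc ‖y <• e - y‖ ^ 2 = ‖(inner A (y <• e - y) (y <• e - y) : A)‖ := norm_sq_eq
        _ = ‖(inner A (y <• e - y) y : A) * e - (inner A (y <• e - y) y : A)‖ := by
            nth_rw 1 [CStarModuleRight.inner_sub_right, inner_op_smul_right]
        _ ≤ ‖(inner A (y <• e - y) y : A) * e‖ + ‖(inner A (y <• e - y) y : A)‖ := norm_sub_le _ _
        _ ≤ ‖(inner A (y <• e - y) y : A)‖ * ‖e‖ + ‖(inner A (y <• e - y) y : A)‖ := by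
            gcongr; exact norm_mul_le _ _
        _ ≤ ‖h0 * e - h0‖ * 1 + ‖h0 * e - h0‖ := by rw [hipn]; gcongr
        _ = 2 * ‖h0 * e - h0‖ := by ring
    have h2 : Tendsto (fun e : A ↦ 2 * ‖h0 * e - h0‖) l (𝓝 0) := by
      have := (hl.tendsto_mul_left h0)
      rw [tendsto_iff_norm_sub_tendsto_zero] at this
      simpa using this.const_mul 2
    have hsq : Tendsto (fun e : A ↦ ‖y <• e - y‖ ^ 2) l (𝓝 0) := by
      refine squeeze_zero' (Eventually.of_forall fun e => by positivity) ?_ h2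
      filter_upwards [hl.eventually_nonneg, hl.eventually_norm] with e he he1
      exact key e he he1
    have hnorm : Tendsto (fun e : A ↦ ‖y <• e - y‖) l (𝓝 0) := by
      have := (Real.continuous_sqrt.tendsto 0).comp hsq
      simpa [Function.comp_def, Real.sqrt_sq (norm_nonneg _)] using this
    have htend : Tendsto (fun e : A ↦ y <• e) l (𝓝 y) := by
      rwa [tendsto_iff_norm_sub_tendsto_zero]
    have htend2 : Tendsto (fun e : A ↦ x + y <• (lam • e)) l (𝓝 (x + lam • y)) := by
      simp only [my_op_smul_smul]
      exact tendsto_const_nhds.add (htend.const_smul lam)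
    have hnt : Tendsto (fun e : A ↦ ‖x + y <• (lam • e)‖ ^ 2) l (𝓝 (‖x + lam • y‖ ^ 2)) :=
      htend2.norm.pow 2
    refine ge_of_tendsto hnt ?_
    filter_upwards [hl.eventually_norm] with e he1
    refine le_trans ?_ (h (lam • e))
    have : ‖lam • e‖ ≤ ‖lam‖ := by
      rw [norm_smul]
      simpa using mul_le_of_le_one_right (norm_nonneg lam) he1
    gcongr
end

section
/- Let A be a C*-algebra, let V be an inner product C*-module over A, let ε ∈ [0, 1), and let x, y ∈ V. If there exists a state φ on A such that φ(⟨x, x⟩) = ∥x∥² and |φ(⟨x, y⟩·a)| ≤ ε·∥a∥·∥x∥·∥y∥ for all a ∈ A, then x is approximately strongly Birkhoff–James orthogonal to y (x ⊥^s_{B^ε} y). -/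
open scoped ComplexOrder RightActions

/-- The December 2024 Mathlib `CStarModule` (right `A`-module, `⟪x, y <• a⟫ = ⟪x, y⟫ * a`),
reproduced verbatim: Mathlib's `CStarModule` is now a left-module class. -/
class OldCStarModule (A E : Type*) [NonUnitalSemiring A] [StarRing A] [Module ℂ A]
    [AddCommGroup E] [Module ℂ E] [PartialOrder A] [SMul Aᵐᵒᵖ E] [Norm A] [Norm E]
    extends Inner A E where
  inner_add_right {x} {y} {z} : inner x (y + z) = inner x y + inner x z
  inner_self_nonneg {x} : 0 ≤ inner x x
  inner_self {x} : inner x x = 0 ↔ x = 0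
  inner_op_smul_right {a : A} {x y : E} : inner x (y <• a) = inner x y * a
  inner_smul_right_complex {z : ℂ} {x} {y} : inner x (z • y) = z • inner x y
  star_inner x y : star (inner x y) = inner y x
  norm_eq_sqrt_norm_inner_self x : ‖x‖ = √‖inner x x‖

lemma OldCStarModule.inner_add_left {A E : Type*} [NonUnitalSemiring A] [StarRing A]
    [Module ℂ A] [AddCommGroup E] [Module ℂ E] [PartialOrder A] [SMul Aᵐᵒᵖ E] [Norm A] [Norm E]
    [OldCStarModule A E] {x y z : E} : inner A (x + y) z = inner A x z + inner A y z := by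
  rw [← OldCStarModule.star_inner, OldCStarModule.inner_add_right, star_add,
    OldCStarModule.star_inner, OldCStarModule.star_inner]

lemma OldCStarModule.inner_op_smul_left {A E : Type*} [NonUnitalSemiring A] [StarRing A]
    [Module ℂ A] [AddCommGroup E] [Module ℂ E] [PartialOrder A] [SMul Aᵐᵒᵖ E] [Norm A] [Norm E]
    [OldCStarModule A E] {a : A} {x y : E} : inner A (x <• a) y = star a * inner A x y := by
  rw [← OldCStarModule.star_inner, OldCStarModule.inner_op_smul_right, star_mul,
    OldCStarModule.star_inner]

lemma OldCStarModule.norm_sq_eq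
    {A : Type*} [NonUnitalCStarAlgebra A] [PartialOrder A] [StarOrderedRing A]
    {E : Type*} [NormedAddCommGroup E] [NormedSpace ℂ E] [SMul Aᵐᵒᵖ E] [OldCStarModule A E] {x : E} : ‖x‖ ^ 2 = ‖inner A x x‖ := by
  rw [OldCStarModule.norm_eq_sqrt_norm_inner_self (A := A) x]
  exact Real.sq_sqrt (norm_nonneg _)

/-- A positive `ℂ`-linear functional on a C⋆-algebra is star-preserving. -/
lemma positive_functional_map_star
    {A : Type*} [NonUnitalCStarAlgebra A] [PartialOrder A] [StarOrderedRing A]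
    (φ : A →L[ℂ] ℂ) (hφ : ∀ a : A, 0 ≤ a → 0 ≤ φ a) (b : A) :
    φ (star b) = starRingEnd ℂ (φ b) := by
  have key : ∀ b : A, starRingEnd ℂ (φ (star b)) = φ b := by
    intro b
    have hb : b ∈ Submodule.span ℂ {a : A | 0 ≤ a} := by
      rw [CStarAlgebra.span_nonneg]; trivial
    induction hb using Submodule.span_induction with
    | mem a ha =>
      have h1 : star a = a := IsSelfAdjoint.of_nonneg ha
      have h2 := hφ a ha
      rw [Complex.nonneg_iff] at h2
      rw [h1, Complex.conj_eq_iff_im.mpr h2.2.symm]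
    | zero => simp
    | add u v _ _ hu hv => simp only [star_add, map_add, hu, hv]
    | smul c u _ hu =>
      simp only [star_smul, map_smul, RCLike.star_def, smul_eq_mul, map_mul,
        Complex.conj_conj, hu]
  have := key (star b)
  rw [star_star] at this
  rw [← this]

/-- Let `ε ∈ [0, 1)` and let `x, y` be elements of an inner product C*-module `E` over a
C*-algebra `A`. If there exists a state `φ` on `A` with `φ(⟪x, x⟫) = ‖x‖²` and
`|φ(⟪x, y⟫ a)| ≤ ε ‖a‖ ‖x‖ ‖y‖` for all `a ∈ A`, then `x ⊥^s_{B^ε} y`. -/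
theorem approx_strong_birkhoff_orthogonal_of_state
    {A : Type*} [NonUnitalCStarAlgebra A] [PartialOrder A] [StarOrderedRing A]
    {E : Type*} [NormedAddCommGroup E] [NormedSpace ℂ E] [SMul Aᵐᵒᵖ E] [OldCStarModule A E]
    (ε : ℝ) (hε : 0 ≤ ε) (hε' : ε < 1) (x y : E)
    (h : ∃ φ : A →L[ℂ] ℂ, ‖φ‖ = 1 ∧ (∀ a : A, 0 ≤ a → 0 ≤ φ a) ∧
      φ (inner A x x : A) = (‖x‖ : ℂ) ^ 2 ∧
      ∀ a : A, ‖φ ((inner A x y : A) * a)‖ ≤ ε * ‖a‖ * ‖x‖ * ‖y‖) :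
    ∀ a : A, ‖x‖ ^ 2 - 2 * ε * ‖a‖ * ‖x‖ * ‖y‖ ≤ ‖x + y <• a‖ ^ 2 := by
  obtain ⟨φ, hφ1, hφpos, hφx, hφxy⟩ := h
  intro a
  set z := x + y <• a with hz
  -- expand the inner product
  have hexp : (inner A z z : A) = (inner A x x : A) + (inner A x y : A) * a
      + star ((inner A x y : A) * a) + star a * (inner A y y : A) * a := by
    simp only [hz, OldCStarModule.inner_add_left, OldCStarModule.inner_add_right,
      OldCStarModule.inner_op_smul_right, OldCStarModule.inner_op_smul_left,
      star_mul]
    rw [OldCStarModule.star_inner]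
    noncomm_ring
  -- apply φ
  have hpos : 0 ≤ φ (star a * (inner A y y : A) * a) :=
    hφpos _ (star_left_conjugate_nonneg OldCStarModule.inner_self_nonneg a)
  have hstar : φ (star ((inner A x y : A) * a)) = starRingEnd ℂ (φ ((inner A x y : A) * a)) :=
    positive_functional_map_star φ hφpos _
  set w : ℂ := φ ((inner A x y : A) * a) with hw
  have hφz : φ (inner A z z : A) = (‖x‖ : ℂ) ^ 2 + w + starRingEnd ℂ w
      + φ (star a * (inner A y y : A) * a) := by
    rw [hexp]
    simp only [map_add, hφx, hstar]; rfl
  -- real part estimate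
  have hre : ‖x‖ ^ 2 - 2 * (ε * ‖a‖ * ‖x‖ * ‖y‖) ≤ (φ (inner A z z : A)).re := by
    rw [hφz]
    simp only [Complex.add_re, Complex.ofReal_pow, Complex.conj_re]
    have h1 : (0:ℝ) ≤ (φ (star a * (inner A y y : A) * a)).re :=
      (Complex.nonneg_iff.mp hpos).1
    have h2 : -(ε * ‖a‖ * ‖x‖ * ‖y‖) ≤ w.re := by
      have := (Complex.abs_re_le_norm w)
      have hle := hφxy a
      rw [← hw] at hle
      have := abs_le.mp (le_trans (Complex.abs_re_le_norm w) hle)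
      linarith
    have h3 : ((‖x‖ : ℂ) ^ 2).re = ‖x‖ ^ 2 := by
      norm_cast
    push_cast at h3 ⊢
    linarith
  have hnorm : (φ (inner A z z : A)).re ≤ ‖z‖ ^ 2 := by
    calc (φ (inner A z z : A)).re ≤ ‖φ (inner A z z : A)‖ := by
          exact Complex.re_le_norm _
    _ ≤ ‖φ‖ * ‖(inner A z z : A)‖ := φ.le_opNorm _
    _ = ‖z‖ ^ 2 := by rw [hφ1, one_mul, OldCStarModule.norm_sq_eq (A := A)]
  linarith
end
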